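/- arXiv:2211.11091 — 3 statements merged into one kernel-verified Lean document; each statement's English description precedes it below -/
import Mathlib

section
/- Let G ≤ S_n be a permutation group acting naturally on V = k^n, where k is a field with char(k) = 0 or char(k) > n. Then the top degree of the vector coinvariants k[V^m]_G is at most binom(n,2), i.e., the graded quotient k[V^m]/I(G,V^m) vanishes in all degrees strictly greater than n(n-1)/2. -/
open MvPolynomial

namespace TopDegAux
variable {A : Type*} [CommRing A]
def esym : List A → ℕ → A
  | _, 0 => 1
  | [], _ + 1 => 0
  | a :: L, d + 1 => esym L (d + 1) + a * esym L d
def hsym : List A → ℕ → A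
  | _, 0 => 1
  | [], _ + 1 => 0
  | a :: L, d + 1 => hsym L (d + 1) + a * hsym (a :: L) d
  termination_by L d => (L.length, d)
@[simp] lemma esym_zero (L : List A) : esym L 0 = 1 := by cases L <;> rfl
@[simp] lemma hsym_zero (L : List A) : hsym L 0 = 1 := by cases L <;> rw [hsym]
@[simp] lemma esym_nil_succ (d : ℕ) : esym ([] : List A) (d+1) = 0 := rfl
@[simp] lemma hsym_nil_succ (d : ℕ) : hsym ([] : List A) (d+1) = 0 := by rw [hsym]
lemma esym_cons (a : A) (L : List A) (d : ℕ) :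
    esym (a :: L) (d+1) = esym L (d+1) + a * esym L d := rfl
lemma hsym_cons (a : A) (L : List A) (d : ℕ) :
    hsym (a :: L) (d+1) = hsym L (d+1) + a * hsym (a :: L) d := by rw [hsym]
lemma hsym_nil (d : ℕ) : hsym ([] : List A) d = if d = 0 then 1 else 0 := by cases d <;> simp
lemma esym_append_single (C : List A) (b : A) (d : ℕ) :
    esym (C ++ [b]) (d+1) = esym C (d+1) + b * esym C d := by
  induction C generalizing d with
  | nil => cases d <;> simp [esym_cons]
  | cons c C ih =>
    cases d with
    | zero => simp only [List.cons_append, esym_cons, esym_zero, ih, mul_one]; ring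
    | succ e => simp only [List.cons_append, esym_cons, ih]; ring
lemma esym_eq_zero_of_length_lt (L : List A) (d : ℕ) (h : L.length < d) : esym L d = 0 := by
  induction L generalizing d with
  | nil => cases d with
    | zero => simp at h
    | succ e => simp
  | cons a L ih =>
    cases d with
    | zero => simp at h
    | succ e =>
      simp only [List.length_cons] at h
      rw [esym_cons, ih _ (by omega), ih _ (by omega), mul_zero, add_zero]

lemma phi (B C : List A) (d : ℕ) :
    (∑ j ∈ Finset.range (d + 1), (-1 : A) ^ j * esym (C ++ B) j * hsym B (d - j))
      = (-1) ^ d * esym C d := by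
  induction B generalizing C d with
  | nil =>
    rw [List.append_nil, Finset.sum_eq_single d]
    · simp [hsym_nil]
    · intro j hj hne
      rw [hsym_nil, if_neg (by simp only [Finset.mem_range] at hj; omega), mul_zero]
    · intro h; simp at h
  | cons b B' ihB =>
    induction d with
    | zero => simp
    | succ d ihd =>
      have hA : C ++ b :: B' = (C ++ [b]) ++ B' := by simp
      rw [hA] at ihd ⊢
      rw [Finset.sum_range_succ]
      have h1 : ∀ j ∈ Finset.range (d+1),
          (-1:A)^j * esym ((C ++ [b]) ++ B') j * hsym (b::B') (d+1-j)
          = (-1:A)^j * esym ((C ++ [b]) ++ B') j * hsym B' (d+1-j)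
            + b * ((-1:A)^j * esym ((C ++ [b]) ++ B') j * hsym (b::B') (d-j)) := by
        intro j hj
        rw [Finset.mem_range] at hj
        have e1 : d + 1 - j = (d - j) + 1 := by omega
        rw [e1, hsym_cons]
        have e2 : d - j + 1 = d + 1 - j := by omega
        rw [e2]
        ring
      rw [Finset.sum_congr rfl h1, Finset.sum_add_distrib, ← Finset.mul_sum, ihd]
      have h2 : (∑ j ∈ Finset.range (d+1), (-1:A)^j * esym ((C ++ [b]) ++ B') j * hsym B' (d+1-j))
          + (-1:A)^(d+1) * esym ((C ++ [b]) ++ B') (d+1)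
         = (-1:A)^(d+1) * esym (C ++ [b]) (d+1) := by
        have h := ihB (C ++ [b]) (d+1)
        rw [Finset.sum_range_succ, Nat.sub_self, hsym_zero, mul_one] at h
        exact h
      rw [Nat.sub_self, hsym_zero, mul_one]
      linear_combination h2 + ((-1:A)^(d+1)) * esym_append_single C b d


variable {B : Type*} [CommRing B]

lemma hsym_mem_span (C B : List A) (d : ℕ) (hC : C.length < d) :
    hsym B d ∈ Ideal.span ((fun j => esym (C ++ B) j) '' Set.Icc 1 d) := by
  have hphi := phi B C d
  rw [esym_eq_zero_of_length_lt C d hC, mul_zero] at hphi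
  have hsplit : Finset.range (d+1) = insert 0 (Finset.Icc 1 d) := by
    ext j; simp only [Finset.mem_range, Finset.mem_insert, Finset.mem_Icc]; omega
  rw [hsplit, Finset.sum_insert (by simp)] at hphi
  simp only [pow_zero, esym_zero, one_mul, Nat.sub_zero, mul_one] at hphi
  rw [eq_neg_of_add_eq_zero_left hphi]
  refine neg_mem (Submodule.sum_mem _ fun j hj => ?_)
  have hg : esym (C ++ B) j ∈ Ideal.span ((fun j => esym (C ++ B) j) '' Set.Icc 1 d) :=
    Ideal.subset_span ⟨j, by simpa using hj, rfl⟩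
  have h2 := Ideal.mul_mem_left _ ((-1:A)^j * hsym B (d-j)) hg
  convert h2 using 1; ring

lemma hsym_mem_subsemiring (T : Subsemiring A) :
    ∀ (L : List A), (∀ x ∈ L, x ∈ T) → ∀ d, hsym L d ∈ T := by
  intro L
  induction L with
  | nil =>
    intro _ d
    cases d with
    | zero => simpa using T.one_mem
    | succ e => simpa using T.zero_mem
  | cons a L ihL =>
    intro hmem d
    induction d with
    | zero => simpa using T.one_mem
    | succ d ihd =>
      rw [hsym_cons]
      exact T.add_mem (ihL (fun x hx => hmem x (List.mem_cons_of_mem a hx)) (d+1))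
        (T.mul_mem (hmem a (List.mem_cons_self)) ihd)

lemma hsym_mem_ideal (E : Ideal A) :
    ∀ (L : List A), (∀ x ∈ L, x ∈ E) → ∀ d, hsym L (d+1) ∈ E := by
  intro L
  induction L with
  | nil => intro _ d; simpa using E.zero_mem
  | cons a L ihL =>
    intro hmem d
    rw [hsym_cons]
    exact E.add_mem (ihL (fun x hx => hmem x (List.mem_cons_of_mem a hx)) d)
      (Ideal.mul_mem_right _ _ (hmem a (List.mem_cons_self)))

lemma hsym_cons_sub_pow_mem (E : Ideal A) (a : A) (L : List A)
    (hL : ∀ x ∈ L, x ∈ E) (d : ℕ) : hsym (a :: L) d - a ^ d ∈ E := by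
  induction d with
  | zero => simpa using E.zero_mem
  | succ d ihd =>
    rw [hsym_cons, pow_succ]
    have heq : hsym L (d+1) + a * hsym (a::L) d - a^d * a
        = hsym L (d+1) + a * (hsym (a::L) d - a^d) := by ring
    rw [heq]
    exact E.add_mem (hsym_mem_ideal E L hL d) (Ideal.mul_mem_left _ a ihd)

lemma map_esym (f : A →+* B) (L : List A) : ∀ d, f (esym L d) = esym (L.map f) d := by
  induction L with
  | nil => intro d; cases d <;> simp
  | cons a L ih =>
    intro d
    cases d with
    | zero => simp
    | succ d => simp only [List.map_cons, esym_cons, map_add, map_mul, ih]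

lemma esym_perm {L₁ L₂ : List A} (h : L₁.Perm L₂) : ∀ d, esym L₁ d = esym L₂ d := by
  induction h with
  | nil => intro d; rfl
  | cons x _ ih =>
    intro d
    cases d with
    | zero => rfl
    | succ d => simp only [esym_cons, ih]
  | swap x y L =>
    intro d
    match d with
    | 0 => rfl
    | 1 => simp only [esym_cons, esym_zero]; ring
    | (e+2) => simp only [esym_cons]; ring
  | trans _ _ ih1 ih2 => intro d; rw [ih1, ih2]

lemma esym_eq_zero_of_forall_zero {L : List A} (hL : ∀ x ∈ L, x = 0) (d : ℕ) :
    esym L (d+1) = 0 := by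
  induction L generalizing d with
  | nil => simp
  | cons a L ih =>
    rw [esym_cons, hL a (List.mem_cons_self), zero_mul, add_zero]
    exact ih (fun x hx => hL x (List.mem_cons_of_mem a hx)) d


open MvPolynomial

section Main
variable {k : Type} [Field k] {n m : ℕ}

/-- The polarization variable `z_i = ∑_j x_{ij} t_j`. -/
noncomputable def zRow (k : Type) [Field k] (n m : ℕ) (i : Fin n) :
    MvPolynomial (Fin m) (MvPolynomial (Fin n × Fin m) k) :=
  ∑ j : Fin m, C (X (i, j)) * X j

noncomputable def zList (k : Type) [Field k] (n m : ℕ) :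
    List (MvPolynomial (Fin m) (MvPolynomial (Fin n × Fin m) k)) :=
  (List.finRange n).map (zRow k n m)

/-- the renaming ring hom attached to a permutation -/
noncomputable def psig (k : Type) [Field k] (n m : ℕ) (g : Equiv.Perm (Fin n)) :
    MvPolynomial (Fin n × Fin m) k →+* MvPolynomial (Fin n × Fin m) k :=
  (rename (fun p : Fin n × Fin m => (g⁻¹ p.1, p.2))).toRingHom

lemma map_psig_zRow (g : Equiv.Perm (Fin n)) (i : Fin n) :
    MvPolynomial.map (psig k n m g) (zRow k n m i) = zRow k n m (g⁻¹ i) := by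
  unfold zRow psig
  rw [map_sum]
  refine Finset.sum_congr rfl fun j _ => ?_
  rw [map_mul, map_C, map_X]
  simp [rename_X]

lemma map_finRange_perm (σ : Equiv.Perm (Fin n)) :
    ((List.finRange n).map σ).Perm (List.finRange n) := by
  apply List.perm_of_nodup_nodup_toFinset_eq
  · exact (List.nodup_finRange n).map σ.injective
  · exact List.nodup_finRange n
  · ext a
    simp only [List.mem_toFinset, List.mem_map, List.mem_finRange, true_and]
    exact ⟨fun _ => trivial, fun _ => ⟨σ⁻¹ a, by simp⟩⟩

lemma esym_zList_invariant (g : Equiv.Perm (Fin n)) (d : ℕ) :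
    MvPolynomial.map (psig k n m g) (esym (zList k n m) d) = esym (zList k n m) d := by
  rw [map_esym]
  apply esym_perm
  unfold zList
  rw [List.map_map]
  have h1 : (List.finRange n).map (MvPolynomial.map (psig k n m g) ∘ zRow k n m)
      = ((List.finRange n).map (fun i => (g⁻¹ : Equiv.Perm (Fin n)) i)).map (zRow k n m) := by
    rw [List.map_map]
    exact List.map_congr_left fun i _ => map_psig_zRow g i
  rw [h1]
  exact (map_finRange_perm g⁻¹).map _

lemma esym_coeff_invariant (g : Equiv.Perm (Fin n)) (d : ℕ) (δ : Fin m →₀ ℕ) :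
    rename (fun p : Fin n × Fin m => (g⁻¹ p.1, p.2)) (coeff δ (esym (zList k n m) d))
      = coeff δ (esym (zList k n m) d) := by
  have : rename (fun p : Fin n × Fin m => (g⁻¹ p.1, p.2)) (coeff δ (esym (zList k n m) d))
      = coeff δ (MvPolynomial.map (psig k n m g) (esym (zList k n m) d)) := by
    rw [coeff_map]; rfl
  rw [this, esym_zList_invariant]

lemma esym_coeff_constantCoeff (d : ℕ) (δ : Fin m →₀ ℕ) :
    constantCoeff (coeff δ (esym (zList k n m) (d+1))) = 0 := by
  have h0 : MvPolynomial.map (constantCoeff (σ := Fin n × Fin m) (R := k))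
      (esym (zList k n m) (d+1)) = 0 := by
    rw [map_esym]
    apply esym_eq_zero_of_forall_zero
    intro x hx
    rw [List.mem_map] at hx
    obtain ⟨y, hy, rfl⟩ := hx
    rw [zList, List.mem_map] at hy
    obtain ⟨i, _, rfl⟩ := hy
    rw [zRow, map_sum]
    refine Finset.sum_eq_zero fun j _ => ?_
    rw [map_mul, map_C, constantCoeff_X]
    simp
  have := congrArg (coeff δ) h0
  rw [coeff_map] at this
  simpa using this



lemma degree_single' {ι : Type*} (a : ι) (b : ℕ) : (Finsupp.single a b).degree = b := by
  classical
  rcases eq_or_ne b 0 with rfl | hb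
  · simp [Finsupp.degree]
  · exact Finsupp.degree_single a b

lemma degree_single_one {ι : Type*} (a : ι) : (Finsupp.single a (1:ℕ)).degree = 1 :=
  degree_single' a 1

lemma degree_eq_sum_univ' {ι : Type*} [Fintype ι] (μ : ι →₀ ℕ) :
    μ.degree = ∑ v, μ v :=
  Finset.sum_subset (Finset.subset_univ _)
    (fun x _ hx => by simpa using Finsupp.notMem_support_iff.1 hx)

lemma degree_add'' {ι : Type*} [Fintype ι] (a b : ι →₀ ℕ) :
    (a + b).degree = a.degree + b.degree := by
  simp only [degree_eq_sum_univ', Finsupp.add_apply, Finset.sum_add_distrib]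

/-- coefficient-wise ideal membership -/
noncomputable def coeffIdeal (J : Ideal (MvPolynomial (Fin n × Fin m) k)) :
    Ideal (MvPolynomial (Fin m) (MvPolynomial (Fin n × Fin m) k)) where
  carrier := {F | ∀ δ, coeff δ F ∈ J}
  add_mem' := fun ha hb δ => by rw [coeff_add]; exact J.add_mem (ha δ) (hb δ)
  zero_mem' := fun δ => by rw [coeff_zero]; exact J.zero_mem
  smul_mem' := fun c F hF δ => by
    rw [smul_eq_mul, coeff_mul]
    exact Submodule.sum_mem _ fun p _ => J.mul_mem_left _ (hF p.2)

lemma mem_coeffIdeal {J : Ideal (MvPolynomial (Fin n × Fin m) k)}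
    {F : MvPolynomial (Fin m) (MvPolynomial (Fin n × Fin m) k)} :
    F ∈ coeffIdeal J ↔ ∀ δ, coeff δ F ∈ J := Iff.rfl

lemma multinomial_cast_ne_zero (hchar : ringChar k = 0 ∨ n < ringChar k)
    (s : ℕ) (hs : s ≤ n) (γ : Fin m →₀ ℕ) (hγ : ∑ j, γ j = s) :
    ((Nat.multinomial Finset.univ ⇑γ : ℕ) : k) ≠ 0 := by
  have hdvd : Nat.multinomial Finset.univ ⇑γ ∣ s.factorial := by
    have hspec := Nat.multinomial_spec Finset.univ ⇑γ
    rw [hγ] at hspec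
    exact Dvd.intro_left _ hspec
  rcases hchar with h0 | hgt
  · haveI : CharP k 0 := h0 ▸ ringChar.charP k
    haveI : CharZero k := CharP.charP_to_charZero k
    exact Nat.cast_ne_zero.2 (Nat.multinomial_pos _ _).ne'
  · intro hz
    haveI := ringChar.charP k
    have hdvd2 : ringChar k ∣ Nat.multinomial Finset.univ ⇑γ :=
      (CharP.cast_eq_zero_iff k (ringChar k) _).1 hz
    have hpr : (ringChar k).Prime := by
      rcases CharP.char_is_prime_or_zero k (ringChar k) with h | h
      · exact h
      · omega
    have : ringChar k ≤ s := (Nat.Prime.dvd_factorial hpr).1 (hdvd2.trans hdvd)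
    omega


/-- the subsemiring of polynomials in `S` whose `t`-coefficients are homogeneous of
the matching degree and supported on rows `≥ l` -/
noncomputable def goodSet (k : Type) [Field k] (n m : ℕ) (l : ℕ) :
    Subsemiring (MvPolynomial (Fin m) (MvPolynomial (Fin n × Fin m) k)) where
  carrier := {F | ∀ δ : Fin m →₀ ℕ, ∀ μ ∈ (coeff δ F).support,
      μ.degree = δ.degree ∧ ∀ v : Fin n × Fin m, μ v ≠ 0 → l ≤ (v.1 : ℕ)}
  zero_mem' := by intro δ μ hμ; rw [coeff_zero] at hμ; simp at hμ
  one_mem' := by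
    intro δ μ hμ
    rw [MvPolynomial.mem_support_iff, coeff_one] at hμ
    split_ifs at hμ with hδ
    · rw [MvPolynomial.coeff_one] at hμ
      split_ifs at hμ with hμ0
      · exact ⟨by subst hδ; subst hμ0; rfl,
          fun v hv => by rw [← hμ0] at hv; simp at hv⟩
      · simp at hμ
    · simp at hμ
  add_mem' := by
    intro a b ha hb δ μ hμ
    rw [coeff_add] at hμ
    rcases Finset.mem_union.1 (MvPolynomial.support_add hμ) with h | h
    · exact ha δ μ h
    · exact hb δ μ h
  mul_mem' := by
    intro a b ha hb δ μ hμ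
    rw [coeff_mul] at hμ
    have h1 := MvPolynomial.support_sum hμ
    rw [Finset.mem_biUnion] at h1
    obtain ⟨p, hp, hμp⟩ := h1
    have h2 := MvPolynomial.support_mul _ _ hμp
    rw [Finset.mem_add] at h2
    obtain ⟨μ₁, hμ₁, μ₂, hμ₂, rfl⟩ := h2
    have hA := ha p.1 μ₁ hμ₁
    have hB := hb p.2 μ₂ hμ₂
    have hδ : p.1 + p.2 = δ := Finset.HasAntidiagonal.mem_antidiagonal.1 hp
    constructor
    · calc (μ₁ + μ₂).degree = μ₁.degree + μ₂.degree := degree_add'' _ _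
        _ = p.1.degree + p.2.degree := by rw [hA.1, hB.1]
        _ = (p.1 + p.2).degree := (degree_add'' _ _).symm
        _ = δ.degree := by rw [hδ]
    · intro v hv
      rw [Finsupp.add_apply] at hv
      by_cases h1 : μ₁ v = 0
      · exact hB.2 v (by omega)
      · exact hA.2 v h1

lemma zRow_mem_goodSet {l : ℕ} {i : Fin n} (hi : l ≤ (i : ℕ)) :
    zRow k n m i ∈ goodSet k n m l := by
  intro δ μ hμ
  rw [zRow, coeff_sum] at hμ
  have h1 := MvPolynomial.support_sum hμ
  rw [Finset.mem_biUnion] at h1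
  obtain ⟨j, _, hμj⟩ := h1
  rw [coeff_C_mul, coeff_X'] at hμj
  split_ifs at hμj with hδ
  · rw [mul_one] at hμj
    have hX := MvPolynomial.support_X (R := k) (n := (i, j)) ▸ hμj
    rw [Finset.mem_singleton] at hX
    subst hX
    constructor
    · rw [← hδ, degree_single_one, degree_single_one]
    · intro v hv
      rw [Finsupp.single_apply] at hv
      split_ifs at hv with hvij
      · rw [← hvij]; exact hi
      · simp at hv
  · rw [mul_zero] at hμj; simp at hμj


/-- the exponent vector supported on row `l` with shape `γ` -/
noncomputable def embRow (n m : ℕ) (l : Fin n) (γ : Fin m →₀ ℕ) : (Fin n × Fin m) →₀ ℕ :=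
  ∑ j : Fin m, Finsupp.single (l, j) (γ j)

lemma embRow_apply (l : Fin n) (γ : Fin m →₀ ℕ) (v : Fin n × Fin m) :
    embRow n m l γ v = if v.1 = l then γ v.2 else 0 := by
  classical
  rw [embRow, Finset.sum_apply']
  rcases eq_or_ne v.1 l with h | h
  · rw [if_pos h]
    obtain ⟨i, j⟩ := v
    simp only at h
    subst h
    rw [Finset.sum_eq_single_of_mem j (Finset.mem_univ j)]
    · rw [Finsupp.single_eq_same]
    · intro j' _ hj'
      exact Finsupp.single_eq_of_ne' (by simp [hj'])
  · rw [if_neg h]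
    refine Finset.sum_eq_zero fun j' _ => Finsupp.single_eq_of_ne' (by
      intro hc
      exact h (by rw [← hc]))
  
lemma degree_embRow (l : Fin n) (γ : Fin m →₀ ℕ) :
    (embRow n m l γ).degree = γ.degree := by
  classical
  rw [embRow]
  have : (∑ j : Fin m, Finsupp.single (l, j) (γ j)).degree
      = ∑ j : Fin m, (Finsupp.single (l, j) (γ j)).degree := by
    apply Finset.cons_induction_on (motive := fun s : Finset (Fin m) =>
      (∑ j ∈ s, Finsupp.single (l, j) (γ j)).degree
        = ∑ j ∈ s, (Finsupp.single (l, j) (γ j)).degree)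
    · simp [Finsupp.degree]
    · intro a s ha ih
      rw [Finset.sum_cons, Finset.sum_cons, ← ih, degree_eq_sum_univ',
        degree_eq_sum_univ', degree_eq_sum_univ' (∑ j ∈ s, Finsupp.single (l, j) (γ j))]
      simp [Finsupp.add_apply, Finset.sum_add_distrib]
  rw [this, degree_eq_sum_univ' γ]
  exact Finset.sum_congr rfl fun j _ => degree_single' _ _

lemma prod_monomial_one {ι σ R' : Type*} [CommSemiring R'] (s : Finset ι) (f : ι → σ →₀ ℕ) :
    (∏ j ∈ s, (monomial (f j) (1:R'))) = monomial (∑ j ∈ s, f j) 1 := by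
  classical
  induction s using Finset.cons_induction with
  | empty => simp
  | cons a s ha ih => rw [Finset.prod_cons, Finset.sum_cons, ih, monomial_mul, one_mul]

lemma coeff_zRow_pow (l : Fin n) (dd : ℕ) (γ : Fin m →₀ ℕ) (hγ : ∑ j, γ j = dd) :
    coeff γ (zRow k n m l ^ dd)
      = monomial (embRow n m l γ) ((Nat.multinomial Finset.univ ⇑γ : ℕ) : k) := by
  classical
  rw [zRow, Finset.sum_pow_eq_sum_piAntidiag, coeff_sum]
  have hterm : ∀ kk : Fin m → ℕ,
      coeff γ ((Nat.multinomial Finset.univ kk : MvPolynomial (Fin m) (MvPolynomial (Fin n × Fin m) k))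
          * ∏ j, (C (X (l, j)) * X j) ^ kk j)
        = (Nat.multinomial Finset.univ kk : MvPolynomial (Fin n × Fin m) k)
          * (∏ j, (X (l, j) : MvPolynomial (Fin n × Fin m) k) ^ kk j)
          * (if (∑ j : Fin m, Finsupp.single j (kk j)) = γ then 1 else 0) := by
    intro kk
    have hprod : (∏ j, ((C (X (l, j)) : MvPolynomial (Fin m) (MvPolynomial (Fin n × Fin m) k)) * X j) ^ kk j)
        = C (∏ j, (X (l, j) : MvPolynomial (Fin n × Fin m) k) ^ kk j)
          * ∏ j, (X j : MvPolynomial (Fin m) (MvPolynomial (Fin n × Fin m) k)) ^ kk j := by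
      rw [map_prod]
      rw [← Finset.prod_mul_distrib]
      refine Finset.prod_congr rfl fun j _ => ?_
      rw [mul_pow, map_pow]
    rw [hprod]
    have hcast : (Nat.multinomial Finset.univ kk : MvPolynomial (Fin m) (MvPolynomial (Fin n × Fin m) k))
        = C (Nat.multinomial Finset.univ kk : MvPolynomial (Fin n × Fin m) k) := by
      rw [map_natCast]
    rw [hcast, ← mul_assoc, ← map_mul, coeff_C_mul]
    have hXprod : (∏ j, (X j : MvPolynomial (Fin m) (MvPolynomial (Fin n × Fin m) k)) ^ kk j)
        = monomial (∑ j : Fin m, Finsupp.single j (kk j)) 1 := by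
      rw [← prod_monomial_one]
      exact Finset.prod_congr rfl fun j _ => X_pow_eq_monomial
    rw [hXprod, coeff_monomial]
  rw [Finset.sum_congr rfl fun kk _ => hterm kk]
  rw [Finset.sum_eq_single_of_mem ⇑γ (by
    rw [Finset.mem_piAntidiag]
    exact ⟨hγ, fun i _ => Finset.mem_univ i⟩)]
  · rw [if_pos (by
      ext j
      rw [Finset.sum_apply']
      rw [Finset.sum_eq_single_of_mem j (Finset.mem_univ j)
        (fun j' _ hj' => Finsupp.single_eq_of_ne' hj')]
      exact Finsupp.single_eq_same), mul_one]
    have hmon : (∏ j, (X (l, j) : MvPolynomial (Fin n × Fin m) k) ^ γ j)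
        = monomial (embRow n m l γ) 1 := by
      rw [embRow, ← prod_monomial_one]
      exact Finset.prod_congr rfl fun j _ => X_pow_eq_monomial
    rw [hmon]
    have hcst : ((Nat.multinomial Finset.univ ⇑γ : ℕ) : MvPolynomial (Fin n × Fin m) k)
        = C ((Nat.multinomial Finset.univ ⇑γ : ℕ) : k) := by rw [map_natCast]
    rw [hcst, C_mul_monomial, mul_one]
  · intro kk hkk hne
    have hcond : ¬ (∑ j' : Fin m, Finsupp.single j' (kk j')) = γ := by
      intro hc
      apply hne
      funext j
      have h2 : (∑ j' : Fin m, Finsupp.single j' (kk j')) j = γ j := by rw [hc]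
      rw [Finset.sum_apply', Finset.sum_eq_single_of_mem j (Finset.mem_univ j)
        (fun j' _ hj' => Finsupp.single_eq_of_ne' hj'), Finsupp.single_eq_same] at h2
      exact h2
    rw [if_neg hcond, mul_zero]



noncomputable def hilbIdeal (k : Type) [Field k] (n m : ℕ) (G : Subgroup (Equiv.Perm (Fin n))) :
    Ideal (MvPolynomial (Fin n × Fin m) k) :=
  Ideal.span {h : MvPolynomial (Fin n × Fin m) k |
    (∀ g ∈ G, rename (fun p : Fin n × Fin m => (g⁻¹ p.1, p.2)) h = h) ∧
    constantCoeff h = 0}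

lemma esym_coeff_mem_hilb (G : Subgroup (Equiv.Perm (Fin n))) (j : ℕ) (hj : 1 ≤ j)
    (δ : Fin m →₀ ℕ) : coeff δ (esym (zList k n m) j) ∈ hilbIdeal k n m G := by
  apply Ideal.subset_span
  constructor
  · intro g _
    exact esym_coeff_invariant g j δ
  · obtain ⟨j', rfl⟩ : ∃ j', j = j' + 1 := ⟨j - 1, by omega⟩
    exact esym_coeff_constantCoeff j' δ

lemma finRange_decomp (l : Fin n) : ∃ Cl Bl : List (Fin n),
    List.finRange n = Cl ++ l :: Bl ∧ Cl.length = (l : ℕ) ∧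
      ∀ i ∈ Bl, (l : ℕ) < (i : ℕ) := by
  have hl : (l : ℕ) < (List.finRange n).length := by
    rw [List.length_finRange]; exact l.isLt
  refine ⟨(List.finRange n).take l, (List.finRange n).drop ((l:ℕ)+1), ?_, ?_, ?_⟩
  · conv_lhs => rw [← List.take_append_drop (l:ℕ) (List.finRange n)]
    rw [List.drop_eq_getElem_cons hl]
    congr 1
    congr 1
    simp
  · rw [List.length_take, List.length_finRange]
    omega
  · intro i hi
    rw [List.mem_iff_getElem] at hi
    obtain ⟨idx, hidx, hval⟩ := hi
    rw [List.getElem_drop] at hval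
    rw [List.getElem_finRange] at hval
    have : (i : ℕ) = (l:ℕ) + 1 + idx := by rw [← hval]; rfl
    omega

lemma key (G : Subgroup (Equiv.Perm (Fin n))) (l : Fin n) (γ : Fin m →₀ ℕ)
    (hγ : γ.degree = (l : ℕ) + 1) :
    ∃ Q : MvPolynomial (Fin n × Fin m) k,
      (monomial (embRow n m l γ) ((Nat.multinomial Finset.univ ⇑γ : ℕ) : k) + Q
          ∈ hilbIdeal k n m G)
      ∧ ∀ μ ∈ Q.support, μ.degree = (l : ℕ) + 1
          ∧ (∀ v : Fin n × Fin m, μ v ≠ 0 → (l : ℕ) ≤ (v.1 : ℕ))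
          ∧ (∃ v : Fin n × Fin m, (l : ℕ) < (v.1 : ℕ) ∧ μ v ≠ 0) := by
  classical
  obtain ⟨Cl, Bl, hsplit, hlen, hBl⟩ := finRange_decomp l
  set Blist := zRow k n m l :: Bl.map (zRow k n m) with hBdef
  have hzlist : zList k n m = Cl.map (zRow k n m) ++ Blist := by
    rw [zList, hsplit, List.map_append, List.map_cons]
  have hγsum : ∑ j, γ j = (l : ℕ) + 1 := by
    rw [← degree_eq_sum_univ', hγ]
  -- membership of hsym in the span of esym's
  have hh := hsym_mem_span (Cl.map (zRow k n m)) Blist ((l:ℕ)+1)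
    (by rw [List.length_map, hlen]; omega)
  rw [← hzlist] at hh
  have hF : ∀ δ, coeff δ (hsym Blist ((l:ℕ)+1)) ∈ hilbIdeal k n m G := by
    have hle : Ideal.span ((fun j => esym (zList k n m) j) '' Set.Icc 1 ((l:ℕ)+1))
        ≤ coeffIdeal (hilbIdeal k n m G) := by
      rw [Ideal.span_le]
      rintro _ ⟨j, hj, rfl⟩
      exact fun δ => esym_coeff_mem_hilb G j (Set.mem_Icc.1 hj).1 δ
    exact hle hh
  -- the remainder Q
  refine ⟨coeff γ (hsym Blist ((l:ℕ)+1))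
      - monomial (embRow n m l γ) ((Nat.multinomial Finset.univ ⇑γ : ℕ) : k), ?_, ?_⟩
  · rw [add_sub_cancel]
    exact hF γ
  · -- support conditions
    set ES : Ideal (MvPolynomial (Fin m) (MvPolynomial (Fin n × Fin m) k)) :=
      Ideal.span ((fun v : Fin n × Fin m => (C (X v) : MvPolynomial (Fin m) (MvPolynomial (Fin n × Fin m) k)))
        '' {v : Fin n × Fin m | (l:ℕ) < (v.1 : ℕ)}) with hESdef
    have hzBm : ∀ x ∈ Bl.map (zRow k n m), x ∈ ES := by
      intro x hx
      rw [List.mem_map] at hx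
      obtain ⟨i, hi, rfl⟩ := hx
      rw [zRow]
      refine Submodule.sum_mem _ fun j _ => ?_
      exact Ideal.mul_mem_right _ _ (Ideal.subset_span ⟨(i, j), hBl i hi, rfl⟩)
    have hdiff : hsym Blist ((l:ℕ)+1) - zRow k n m l ^ ((l:ℕ)+1) ∈ ES :=
      hsym_cons_sub_pow_mem ES (zRow k n m l) (Bl.map (zRow k n m)) hzBm ((l:ℕ)+1)
    have hER : coeff γ (hsym Blist ((l:ℕ)+1) - zRow k n m l ^ ((l:ℕ)+1))
        ∈ Ideal.span (X '' {v : Fin n × Fin m | (l:ℕ) < (v.1 : ℕ)}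
            : Set (MvPolynomial (Fin n × Fin m) k)) := by
      have hle : ES ≤ coeffIdeal (Ideal.span (X '' {v : Fin n × Fin m | (l:ℕ) < (v.1 : ℕ)})) := by
        rw [hESdef, Ideal.span_le]
        rintro _ ⟨v, hv, rfl⟩
        intro δ
        rw [coeff_C]
        split_ifs
        · exact Ideal.subset_span ⟨v, hv, rfl⟩
        · exact Submodule.zero_mem _
      exact hle hdiff γ
    rw [coeff_sub, coeff_zRow_pow l ((l:ℕ)+1) γ hγsum] at hER
    have hgood : hsym Blist ((l:ℕ)+1) ∈ goodSet k n m (l:ℕ) := by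
      apply hsym_mem_subsemiring
      intro x hx
      rcases List.mem_cons.1 hx with rfl | hx
      · exact zRow_mem_goodSet le_rfl
      · rw [List.mem_map] at hx
        obtain ⟨i, hi, rfl⟩ := hx
        exact zRow_mem_goodSet (le_of_lt (hBl i hi))
    intro μ hμ
    have h3 := mem_ideal_span_X_image.1 hER μ hμ
    obtain ⟨v0, hv0, hv0ne⟩ := h3
    have hcases : μ ∈ (coeff γ (hsym Blist ((l:ℕ)+1))).support ∨ μ = embRow n m l γ := by
      rcases Finset.mem_union.1 (MvPolynomial.support_sub _ _ _ hμ) with h | h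
      · exact Or.inl h
      · right
        rw [MvPolynomial.mem_support_iff, coeff_monomial] at h
        split_ifs at h with he
        · exact he.symm
        · simp at h
    rcases hcases with hcF | rfl
    · have hg := hgood γ μ hcF
      exact ⟨by rw [hg.1, hγ], hg.2, v0, hv0, hv0ne⟩
    · refine ⟨by rw [degree_embRow, hγ], ?_, v0, hv0, hv0ne⟩
      intro v hv
      rw [embRow_apply] at hv
      split_ifs at hv with hvl
      · rw [hvl]
      · simp at hv


/-- degree of row `i` of an exponent vector -/
noncomputable def rowDeg (μ : (Fin n × Fin m) →₀ ℕ) (i : Fin n) : ℕ := ∑ j, μ (i, j)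

/-- weight used for the straightening induction -/
noncomputable def wt (Bd : ℕ) (μ : (Fin n × Fin m) →₀ ℕ) : ℕ :=
  ∑ i : Fin n, rowDeg μ i * Bd ^ (n - 1 - (i : ℕ))

lemma degree_eq_sum_rowDeg (μ : (Fin n × Fin m) →₀ ℕ) :
    μ.degree = ∑ i, rowDeg μ i := by
  rw [degree_eq_sum_univ', Fintype.sum_prod_type]
  rfl

lemma rowDeg_add (a b : (Fin n × Fin m) →₀ ℕ) (i : Fin n) :
    rowDeg (a + b) i = rowDeg a i + rowDeg b i := by
  simp [rowDeg, Finsupp.add_apply, Finset.sum_add_distrib]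

lemma wt_add (Bd : ℕ) (a b : (Fin n × Fin m) →₀ ℕ) :
    wt Bd (a + b) = wt Bd a + wt Bd b := by
  simp [wt, rowDeg_add, add_mul, Finset.sum_add_distrib]

lemma rowDeg_embRow (l : Fin n) (γ : Fin m →₀ ℕ) (i : Fin n) :
    rowDeg (embRow n m l γ) i = if i = l then γ.degree else 0 := by
  rw [rowDeg]
  rcases eq_or_ne i l with rfl | h
  · rw [if_pos rfl, degree_eq_sum_univ']
    refine Finset.sum_congr rfl fun j _ => ?_
    rw [embRow_apply]
    simp
  · rw [if_neg h]
    refine Finset.sum_eq_zero fun j _ => ?_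
    rw [embRow_apply]
    simp [h]

lemma wt_embRow (Bd : ℕ) (l : Fin n) (γ : Fin m →₀ ℕ) :
    wt Bd (embRow n m l γ) = γ.degree * Bd ^ (n - 1 - (l : ℕ)) := by
  rw [wt, Finset.sum_eq_single_of_mem l (Finset.mem_univ l)]
  · rw [rowDeg_embRow, if_pos rfl]
  · intro i _ hi
    rw [rowDeg_embRow, if_neg hi, zero_mul]

lemma exists_big_row (μ : (Fin n × Fin m) →₀ ℕ) (hdeg : n.choose 2 < μ.degree) :
    ∃ l : Fin n, (l : ℕ) + 1 ≤ rowDeg μ l := by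
  by_contra hc
  push_neg at hc
  have h1 : μ.degree ≤ ∑ i : Fin n, (i : ℕ) := by
    rw [degree_eq_sum_rowDeg]
    exact Finset.sum_le_sum fun i _ => by have := hc i; omega
  rw [Fin.sum_univ_eq_sum_range (fun i => i) n, Finset.sum_range_id] at h1
  rw [Nat.choose_two_right] at hdeg
  omega

lemma exists_le_shape (ν : Fin m →₀ ℕ) (s : ℕ) (hs : s ≤ ν.degree) :
    ∃ γ : Fin m →₀ ℕ, γ ≤ ν ∧ γ.degree = s := by
  induction s with
  | zero => exact ⟨0, zero_le, by simp [Finsupp.degree]⟩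
  | succ s ih =>
    obtain ⟨γ, hle, hdeg⟩ := ih (by omega)
    have hlt : ∃ j, γ j < ν j := by
      by_contra h
      push_neg at h
      have : ν.degree ≤ γ.degree := by
        rw [degree_eq_sum_univ', degree_eq_sum_univ']
        exact Finset.sum_le_sum fun j _ => h j
      omega
    obtain ⟨j, hj⟩ := hlt
    refine ⟨γ + Finsupp.single j 1, ?_, by rw [degree_add'', hdeg, degree_single']⟩
    rw [Finsupp.le_def]
    intro j'
    rw [Finsupp.add_apply, Finsupp.single_apply]
    rcases eq_or_ne j j' with rfl | h
    · simpa using hj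
    · rw [if_neg h, add_zero]
      exact (Finsupp.le_def.1 hle) j'

lemma wt_lt_of_support (Bd : ℕ) (l : Fin n) (hBd : (l : ℕ) + 1 < Bd)
    (ν : (Fin n × Fin m) →₀ ℕ) (hdeg : ν.degree = (l : ℕ) + 1)
    (hrows : ∀ v : Fin n × Fin m, ν v ≠ 0 → (l : ℕ) ≤ (v.1 : ℕ))
    (hex : ∃ v : Fin n × Fin m, (l : ℕ) < (v.1 : ℕ) ∧ ν v ≠ 0) :
    wt Bd ν < ((l : ℕ) + 1) * Bd ^ (n - 1 - (l : ℕ)) := by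
  obtain ⟨v0, hv0l, hv0ne⟩ := hex
  have hln : (l : ℕ) + 2 ≤ n := by
    have := v0.1.isLt
    omega
  have hrow0 : ∀ i : Fin n, (i : ℕ) < (l : ℕ) → rowDeg ν i = 0 := by
    intro i hi
    refine Finset.sum_eq_zero fun j _ => ?_
    by_contra h
    have h2 : (l : ℕ) ≤ (i : ℕ) := hrows (i, j) h
    omega
  have hrowv0 : 1 ≤ rowDeg ν v0.1 := by
    have h1 : ν v0 ≤ rowDeg ν v0.1 :=
      Finset.single_le_sum (f := fun j => ν (v0.1, j)) (fun _ _ => Nat.zero_le _)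
        (Finset.mem_univ v0.2)
    omega
  have hsumrow : ∑ i, rowDeg ν i = (l : ℕ) + 1 := by
    rw [← degree_eq_sum_rowDeg, hdeg]
  have hrowl : rowDeg ν l ≤ (l : ℕ) := by
    have hne : l ≠ v0.1 := by intro h; rw [h] at hv0l; omega
    have h2 : rowDeg ν l + rowDeg ν v0.1 ≤ ∑ i, rowDeg ν i := by
      have := Finset.add_sum_erase _ (rowDeg ν) (Finset.mem_univ l)
      have h3 : rowDeg ν v0.1 ≤ ∑ i ∈ Finset.univ.erase l, rowDeg ν i :=
        Finset.single_le_sum (f := rowDeg ν) (fun _ _ => Nat.zero_le _)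
          (Finset.mem_erase.2 ⟨hne.symm, Finset.mem_univ _⟩)
      omega
    omega
  set T := Finset.univ.filter (fun i : Fin n => (l : ℕ) < (i : ℕ)) with hT
  have hsplit : wt Bd ν = rowDeg ν l * Bd ^ (n - 1 - (l : ℕ))
      + ∑ i ∈ T, rowDeg ν i * Bd ^ (n - 1 - (i : ℕ)) := by
    rw [wt, ← Finset.sum_filter_add_sum_filter_not Finset.univ
      (fun i : Fin n => (l : ℕ) < (i : ℕ))]
    rw [add_comm]
    congr 1
    rw [Finset.sum_eq_single_of_mem l]
    · rw [Finset.mem_filter]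
      exact ⟨Finset.mem_univ l, by omega⟩
    · intro i hi hne
      rw [Finset.mem_filter] at hi
      have : (i : ℕ) < (l : ℕ) := by
        have h4 : (i : ℕ) ≠ (l : ℕ) := fun hc => hne (Fin.ext hc)
        omega
      rw [hrow0 i this, zero_mul]
  have hTsum : ∑ i ∈ T, rowDeg ν i ≤ (l : ℕ) + 1 := by
    rw [← hsumrow]
    exact Finset.sum_le_sum_of_subset (Finset.subset_univ T)
  have hTbound : ∑ i ∈ T, rowDeg ν i * Bd ^ (n - 1 - (i : ℕ))
      ≤ ((l : ℕ) + 1) * Bd ^ (n - 2 - (l : ℕ)) := by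
    calc ∑ i ∈ T, rowDeg ν i * Bd ^ (n - 1 - (i : ℕ))
        ≤ ∑ i ∈ T, rowDeg ν i * Bd ^ (n - 2 - (l : ℕ)) := by
          refine Finset.sum_le_sum fun i hi => ?_
          rw [hT, Finset.mem_filter] at hi
          exact Nat.mul_le_mul_left _ (Nat.pow_le_pow_right (by omega) (by omega))
      _ = (∑ i ∈ T, rowDeg ν i) * Bd ^ (n - 2 - (l : ℕ)) := by rw [Finset.sum_mul]
      _ ≤ ((l : ℕ) + 1) * Bd ^ (n - 2 - (l : ℕ)) := Nat.mul_le_mul_right _ hTsum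
  have hpow : ((l : ℕ) + 1) * Bd ^ (n - 2 - (l : ℕ)) < Bd ^ (n - 1 - (l : ℕ)) := by
    have h5 : n - 1 - (l : ℕ) = (n - 2 - (l : ℕ)) + 1 := by omega
    rw [h5, pow_succ, mul_comm (Bd ^ (n - 2 - (l : ℕ))) Bd]
    have hBdpos : 0 < Bd ^ (n - 2 - (l : ℕ)) := Nat.pow_pos (by omega)
    calc ((l : ℕ) + 1) * Bd ^ (n - 2 - (l : ℕ))
        < Bd * Bd ^ (n - 2 - (l : ℕ)) := by
          exact Nat.mul_lt_mul_of_lt_of_le hBd (le_refl _) hBdpos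
      _ = Bd * Bd ^ (n - 2 - (l : ℕ)) := rfl
  calc wt Bd ν = rowDeg ν l * Bd ^ (n - 1 - (l : ℕ))
      + ∑ i ∈ T, rowDeg ν i * Bd ^ (n - 1 - (i : ℕ)) := hsplit
    _ ≤ (l : ℕ) * Bd ^ (n - 1 - (l : ℕ)) + ((l : ℕ) + 1) * Bd ^ (n - 2 - (l : ℕ)) :=
        Nat.add_le_add (Nat.mul_le_mul_right _ hrowl) hTbound
    _ < (l : ℕ) * Bd ^ (n - 1 - (l : ℕ)) + Bd ^ (n - 1 - (l : ℕ)) :=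
        Nat.add_lt_add_left hpow _
    _ = ((l : ℕ) + 1) * Bd ^ (n - 1 - (l : ℕ)) := by ring


lemma mono_mem (hchar : ringChar k = 0 ∨ n < ringChar k) (G : Subgroup (Equiv.Perm (Fin n)))
    (d : ℕ) (hd : n.choose 2 < d) :
    ∀ W : ℕ, ∀ μ : (Fin n × Fin m) →₀ ℕ, wt (d+1) μ ≤ W → μ.degree = d → ∀ c : k,
      monomial μ c ∈ hilbIdeal k n m G := by
  intro W
  induction W using Nat.strong_induction_on with
  | _ W ih =>
  intro μ hW hdeg c
  obtain ⟨l, hl⟩ := exists_big_row μ (by omega)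
  set ν : Fin m →₀ ℕ := Finsupp.equivFunOnFinite.symm (fun j => μ (l, j)) with hνdef
  have hνapp : ∀ j, ν j = μ (l, j) := fun j => rfl
  have hνdeg : ν.degree = rowDeg μ l := by
    rw [degree_eq_sum_univ', rowDeg]
    exact Finset.sum_congr rfl fun j _ => hνapp j
  obtain ⟨γ, hγle, hγdeg⟩ := exists_le_shape ν ((l : ℕ) + 1) (by omega)
  set e := embRow n m l γ with hedef
  have hele : e ≤ μ := by
    rw [Finsupp.le_def]
    rintro ⟨v1, v2⟩
    rw [hedef, embRow_apply]
    rcases eq_or_ne v1 l with rfl | h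
    · rw [if_pos rfl]
      have h1 := Finsupp.le_def.1 hγle v2
      rw [hνapp] at h1
      exact h1
    · rw [if_neg h]
      exact Nat.zero_le _
  set μ'' := μ - e with hμ''def
  have hsum : e + μ'' = μ := add_tsub_cancel_of_le hele
  have hγsum : ∑ j, γ j = (l : ℕ) + 1 := by rw [← degree_eq_sum_univ', hγdeg]
  have hl1d : (l : ℕ) + 1 ≤ d := by
    have h1 : rowDeg μ l ≤ μ.degree := by
      rw [degree_eq_sum_rowDeg]
      exact Finset.single_le_sum (f := rowDeg μ) (fun _ _ => Nat.zero_le _) (Finset.mem_univ l)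
    omega
  obtain ⟨Q, hQmem, hQsupp⟩ := key (k := k) G l γ hγdeg
  rw [← hedef] at hQmem
  set cm : k := ((Nat.multinomial Finset.univ ⇑γ : ℕ) : k) with hcmdef
  have hcm : cm ≠ 0 := multinomial_cast_ne_zero hchar ((l : ℕ) + 1) (by have := l.isLt; omega) γ hγsum
  have hdege : e.degree = (l : ℕ) + 1 := by rw [hedef, degree_embRow, hγdeg]
  have hdegμ'' : μ''.degree + ((l : ℕ) + 1) = d := by
    have h1 : μ.degree = e.degree + μ''.degree := by rw [← hsum, degree_add'']
    omega
  have hid : monomial μ c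
      = (c * cm⁻¹) • ((monomial μ'' (1:k)) * (monomial e cm + Q))
        - (c * cm⁻¹) • ((monomial μ'' (1:k)) * Q) := by
    rw [mul_add, smul_add, add_sub_cancel_right, monomial_mul, one_mul, add_comm μ'' e, hsum,
      smul_monomial]
    congr 1
    rw [smul_eq_mul, mul_assoc, inv_mul_cancel₀ hcm, mul_one]
  rw [hid]
  refine Submodule.sub_mem _ ?_ ?_
  · exact Submodule.smul_of_tower_mem _ _ (Ideal.mul_mem_left _ _ hQmem)
  · refine Submodule.smul_of_tower_mem _ _ ?_
    have hexp : (monomial μ'' (1:k)) * Q = ∑ ρ ∈ Q.support, monomial (μ'' + ρ) (coeff ρ Q) := by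
      conv_lhs => rw [as_sum Q]
      rw [Finset.mul_sum]
      exact Finset.sum_congr rfl fun ρ _ => by rw [monomial_mul, one_mul]
    rw [hexp]
    refine Submodule.sum_mem _ fun ρ hρ => ?_
    obtain ⟨hρdeg, hρrows, hρex⟩ := hQsupp ρ hρ
    have hwtρ : wt (d+1) ρ < wt (d+1) e := by
      rw [hedef, wt_embRow, hγdeg]
      exact wt_lt_of_support (d+1) l (by omega) ρ hρdeg hρrows hρex
    have hwtlt : wt (d+1) (μ'' + ρ) < W := by
      have h1 : wt (d+1) μ = wt (d+1) e + wt (d+1) μ'' := by rw [← hsum, wt_add]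
      have h2 : wt (d+1) (μ'' + ρ) = wt (d+1) μ'' + wt (d+1) ρ := wt_add _ _ _
      omega
    exact ih (wt (d+1) (μ'' + ρ)) hwtlt (μ'' + ρ) le_rfl
      (by rw [degree_add'']; omega) _

theorem top_degree_main (hchar : ringChar k = 0 ∨ n < ringChar k)
    (G : Subgroup (Equiv.Perm (Fin n)))
    (f : MvPolynomial (Fin n × Fin m) k) (d : ℕ) (hd : n.choose 2 < d)
    (hf : f.IsHomogeneous d) : f ∈ hilbIdeal k n m G := by
  rw [as_sum f]
  refine Submodule.sum_mem _ fun μ hμ => ?_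
  have hdμ : μ.degree = d := by
    have h1 := hf (MvPolynomial.mem_support_iff.1 hμ)
    rwa [Pi.one_def, ← Finsupp.degree_eq_weight_one] at h1
  exact mono_mem hchar G d hd (wt (d+1) μ) μ le_rfl hdμ _

end Main
end TopDegAux


/-- For a permutation group `G ≤ Sₙ` acting on `V = kⁿ` (diagonally on `Vᵐ`),
with `char k = 0` or `char k > n`, the top degree of the vector coinvariants
`k[Vᵐ]_G = k[Vᵐ]/I(G,Vᵐ)` is at most `binom(n,2)`: every homogeneous polynomial of
degree `> n(n-1)/2` lies in the Hilbert ideal `I(G,Vᵐ)`, the ideal generated by the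
`G`-invariant polynomials of positive degree (zero constant term). -/
theorem top_degree_vector_coinvariants (k : Type) [Field k] (n m : ℕ)
    (hchar : ringChar k = 0 ∨ n < ringChar k)
    (G : Subgroup (Equiv.Perm (Fin n)))
    (f : MvPolynomial (Fin n × Fin m) k) (d : ℕ) (hd : n.choose 2 < d)
    (hf : f.IsHomogeneous d) :
    f ∈ Ideal.span {h : MvPolynomial (Fin n × Fin m) k |
      (∀ g ∈ G, rename (fun p : Fin n × Fin m => (g⁻¹ p.1, p.2)) h = h) ∧
      constantCoeff h = 0} :=
  TopDegAux.top_degree_main hchar G f d hd hf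
end

section
/- Let G ≤ S_n be a permutation group acting naturally on V = k^n, where k is a field with char(k) = 0 or char(k) > n. Then the Hilbert ideal I(G,V^m) ⊆ k[V^m] is generated by polynomials of degree at most binom(n,2) + 1, and these generators can be chosen to be G-invariant. -/
open MvPolynomial

namespace HilbertIdealAux

/-- The set of fully `Sₙ`-symmetric polynomials of degree at most `binom(n,2)+1`
with zero constant coefficient. -/
def SymSet (k : Type) [Field k] (n m : ℕ) : Set (MvPolynomial (Fin n × Fin m) k) :=
  {f | (∀ σ : Equiv.Perm (Fin n), rename (fun p : Fin n × Fin m => (σ p.1, p.2)) f = f)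
     ∧ constantCoeff f = 0 ∧ f.totalDegree ≤ n.choose 2 + 1}

lemma cast_ne_zero_of_dvd_factorial (k : Type) [Field k] (n : ℕ)
    (hchar : ringChar k = 0 ∨ n < ringChar k) {N : ℕ} (hN : 0 < N)
    (hdvd : N ∣ n.factorial) : (N : k) ≠ 0 := by
  rcases hchar with h0 | hlt
  · haveI : CharP k 0 := h0 ▸ ringChar.charP k
    haveI : CharZero k := CharP.charP_to_charZero k
    exact Nat.cast_ne_zero.mpr hN.ne'
  · set p := ringChar k with hp
    haveI : CharP k p := ringChar.charP k
    rcases CharP.char_is_prime_or_zero k p with hprime | hzero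
    · intro hcast
      have hdvdN : p ∣ N := (CharP.cast_eq_zero_iff k p N).mp hcast
      have : p ∣ n.factorial := hdvdN.trans hdvd
      have := (hprime.dvd_factorial).mp this
      omega
    · omega

lemma exists_hit {n t q : ℕ} (htq : n + 1 = t + q) (i : Fin t → Fin n)
    (hi : Function.Injective i) (β : Fin q → Fin n) (hβ : Function.Injective β) :
    ∃ s l, β l = i s := by
  classical
  by_contra hcon
  push_neg at hcon
  have hdisj : Disjoint (Finset.univ.image i) (Finset.univ.image β) := by
    rw [Finset.disjoint_left]
    rintro a ha hb
    rcases Finset.mem_image.mp ha with ⟨s, -, rfl⟩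
    rcases Finset.mem_image.mp hb with ⟨l, -, he⟩
    exact hcon s l he
  have h1 : (Finset.univ.image i).card = t := by
    rw [Finset.card_image_of_injective _ hi, Finset.card_univ, Fintype.card_fin]
  have h2 : (Finset.univ.image β).card = q := by
    rw [Finset.card_image_of_injective _ hβ, Finset.card_univ, Fintype.card_fin]
  have := Finset.card_union_of_disjoint hdisj
  have hle := Finset.card_le_univ (Finset.univ.image i ∪ Finset.univ.image β)
  rw [this, h1, h2, Fintype.card_fin] at hle
  omega

lemma exists_heavy {n : ℕ} (c : Fin n → ℕ) (h : n.choose 2 < ∑ i, c i) :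
    ∃ T : Finset (Fin n), T.Nonempty ∧ ∀ i ∈ T, n + 1 ≤ c i + T.card := by
  classical
  by_contra hcon
  push_neg at hcon
  have hcard : ∀ v : ℕ, 1 ≤ v → v ≤ n →
      (Finset.univ.filter (fun i => v ≤ c i)).card + v ≤ n := by
    intro v hv1 hvn
    set T := Finset.univ.filter (fun i => v ≤ c i) with hT
    rcases T.eq_empty_or_nonempty with he | hne
    · rw [he]; simpa using hvn
    · obtain ⟨i, hiT, hlt⟩ := hcon T hne
      have hvc : v ≤ c i := (Finset.mem_filter.mp hiT).2
      omega
  have hlt : ∀ i, c i < n := by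
    intro i
    rcases Nat.eq_zero_or_pos n with rfl | hn
    · exact absurd i.2 (by omega)
    · by_contra hge
      push_neg at hge
      have hi : i ∈ Finset.univ.filter (fun i => n ≤ c i) := by simp [hge]
      have h1 := hcard n (by omega) le_rfl
      have hpos : 1 ≤ (Finset.univ.filter (fun i => n ≤ c i)).card :=
        Finset.card_pos.mpr ⟨i, hi⟩
      omega
  have hsum : ∑ i, c i = ∑ i, ((Finset.range n).filter (fun v => v < c i)).card := by
    refine Finset.sum_congr rfl fun i _ => ?_
    have heq : (Finset.range n).filter (fun v => v < c i) = Finset.range (c i) := by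
      ext v
      simp only [Finset.mem_filter, Finset.mem_range]
      exact ⟨fun hv => hv.2, fun hv => ⟨lt_trans hv (hlt i), hv⟩⟩
    rw [heq, Finset.card_range]
  have hswap : ∑ i, ((Finset.range n).filter (fun v => v < c i)).card
      = ∑ v ∈ Finset.range n, (Finset.univ.filter (fun i => v < c i)).card := by
    simp only [Finset.card_filter]
    exact Finset.sum_comm
  have hbound : ∀ v ∈ Finset.range n,
      (Finset.univ.filter (fun i => v < c i)).card ≤ n - 1 - v := by
    intro v hv
    rw [Finset.mem_range] at hv
    have h1 := hcard (v + 1) (by omega) (by omega)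
    have heq : (Finset.univ.filter (fun i => v < c i))
        = (Finset.univ.filter (fun i => v + 1 ≤ c i)) := by
      apply Finset.filter_congr
      intro i _
      exact Nat.lt_iff_add_one_le
    rw [heq]
    omega
  have hfinal : ∑ i, c i ≤ ∑ v ∈ Finset.range n, (n - 1 - v) := by
    rw [hsum, hswap]
    exact Finset.sum_le_sum hbound
  have hrefl : ∑ v ∈ Finset.range n, (n - 1 - v) = ∑ v ∈ Finset.range n, v :=
    Finset.sum_range_reflect (fun v => v) n
  rw [hrefl, Finset.sum_range_id, ← Nat.choose_two_right] at hfinal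
  omega

lemma exists_split {m : ℕ} (q : ℕ) (e : Fin m →₀ ℕ) (h : q ≤ ∑ j, e j) :
    ∃ z : Fin q → (Fin m →₀ ℕ), (∀ l, z l ≠ 0) ∧ (∑ l, z l) ≤ e := by
  classical
  induction q generalizing e with
  | zero => exact ⟨fun l => l.elim0, fun l => l.elim0, by simp⟩
  | succ q ih =>
    have hpos : 0 < ∑ j, e j := by omega
    obtain ⟨j, hj⟩ : ∃ j, 0 < e j := by
      by_contra hc
      push_neg at hc
      simp only [Nat.le_zero] at hc
      rw [Finset.sum_eq_zero (fun j _ => hc j)] at hpos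
      omega
    have hle : Finsupp.single j 1 ≤ e := Finsupp.single_le_iff.mpr hj
    set e' := e - Finsupp.single j 1 with he'
    have hadd : e' + Finsupp.single j 1 = e := tsub_add_cancel_of_le hle
    have hsingle : ∑ x, (Finsupp.single j (1:ℕ)) x = 1 := by
      simp [Finsupp.single_apply, Finset.sum_ite_eq]
    have hsum' : ∑ x, e' x + 1 = ∑ x, e x := by
      calc ∑ x, e' x + 1 = ∑ x, e' x + ∑ x, (Finsupp.single j (1:ℕ)) x := by rw [hsingle]
        _ = ∑ x, (e' x + (Finsupp.single j (1:ℕ)) x) := (Finset.sum_add_distrib).symm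
        _ = ∑ x, e x := by
            rw [← hadd]
            exact Finset.sum_congr rfl fun x _ => (Finsupp.add_apply e' _ x).symm
    obtain ⟨z', hz'ne, hz'le⟩ := ih e' (by omega)
    refine ⟨Fin.cons (Finsupp.single j 1) z', ?_, ?_⟩
    · intro l
      refine Fin.cases ?_ ?_ l
      · simp only [Fin.cons_zero]
        exact fun hz => one_ne_zero (Finsupp.single_eq_zero.mp hz)
      · intro l'
        simp only [Fin.cons_succ]
        exact hz'ne l'
    · rw [Fin.sum_cons]
      calc Finsupp.single j 1 + ∑ l, z' l ≤ Finsupp.single j 1 + e' := by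
            exact add_le_add le_rfl hz'le
        _ = e := by rw [add_comm, hadd]

lemma exists_le_sum_eq {A : Type} [Fintype A] (u : A →₀ ℕ) (N : ℕ) (h : N ≤ ∑ p, u p) :
    ∃ v : A →₀ ℕ, v ≤ u ∧ ∑ p, v p = N := by
  classical
  induction N with
  | zero => exact ⟨0, Finsupp.le_def.mpr fun i => Nat.zero_le _, by simp⟩
  | succ N ih =>
    obtain ⟨v, hvu, hvs⟩ := ih (by omega)
    obtain ⟨j, hj⟩ : ∃ j, v j < u j := by
      by_contra hc
      push_neg at hc
      have : ∑ p, u p ≤ ∑ p, v p := Finset.sum_le_sum (fun p _ => hc p)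
      omega
    refine ⟨v + Finsupp.single j 1, ?_, ?_⟩
    · rw [Finsupp.le_def]
      intro p
      rw [Finsupp.add_apply, Finsupp.single_apply]
      rcases eq_or_ne j p with rfl | hne
      · simpa using hj
      · simpa [hne] using (Finsupp.le_def.mp hvu p)
    · simp only [Finsupp.add_apply]
      rw [Finset.sum_add_distrib, hvs]
      simp [Finsupp.single_apply, Finset.sum_ite_eq]

lemma prod_monomial_one {k : Type} [Field k] {A ι : Type} [DecidableEq ι]
    (s : Finset ι) (w : ι → (A →₀ ℕ)) :
    (∏ p ∈ s, (monomial (w p) (1 : k))) = monomial (∑ p ∈ s, w p) 1 := by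
  classical
  induction s using Finset.induction_on with
  | empty => simp [MvPolynomial.monomial_zero', MvPolynomial.C_1]
  | insert _ _ hx ih =>
    rw [Finset.prod_insert hx, ih, MvPolynomial.monomial_mul, Finset.sum_insert hx, mul_one]


lemma injcol {n m : ℕ} (a : Fin n) : Function.Injective (fun j : Fin m => (a, j)) := by
  intro j1 j2 h
  simpa using congrArg Prod.snd h

lemma mapDomain_col_ne_zero {n m : ℕ} (a : Fin n) {v : Fin m →₀ ℕ} (hv : v ≠ 0) :
    Finsupp.mapDomain (fun j : Fin m => (a, j)) v ≠ 0 := by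
  intro h0
  apply hv
  apply Finsupp.mapDomain_injective (injcol a)
  rw [h0, Finsupp.mapDomain_zero]

lemma mapDomain_col_degree {n m : ℕ} (a : Fin n) (v : Fin m →₀ ℕ) :
    ((Finsupp.mapDomain (fun j : Fin m => (a, j)) v).sum fun _ e => e) = ∑ j, v j := by
  rw [Finsupp.sum_mapDomain_index (fun _ => rfl) (fun _ _ _ => rfl)]
  exact Finsupp.sum_fintype _ _ (fun _ => rfl)

lemma key (k : Type) [Field k] (n m : ℕ) (hn : ((n.factorial : k)) ≠ 0)
    {t q : ℕ} (htq : n + 1 = t + q)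
    (i : Fin t → Fin n) (hi : Function.Injective i)
    (α : Fin q → Fin n) (hα : Function.Injective α)
    (z : Fin t × Fin q → (Fin m →₀ ℕ)) (hz : ∀ p, z p ≠ 0)
    (hdeg : ∑ p : Fin t × Fin q, (∑ j, z p j) ≤ n.choose 2 + 1) :
    (monomial (∑ p : Fin t × Fin q, Finsupp.mapDomain (fun j => (i p.1, j)) (z p)) (1:k))
      ∈ Ideal.span (SymSet k n m) := by
  classical
  set w : Fin n → (Fin t × Fin q) → ((Fin n × Fin m) →₀ ℕ) :=
    fun a p => Finsupp.mapDomain (fun j : Fin m => (a, j)) (z p) with hw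
  set A : Fin t × Fin q → MvPolynomial (Fin n × Fin m) k :=
    fun p => monomial (w (i p.1) p) (1:k) with hA
  set Bf : Equiv.Perm (Fin n) → Fin t × Fin q → MvPolynomial (Fin n × Fin m) k :=
    fun σ p => - monomial (w (σ (α p.2)) p) (1:k) with hBf
  have hrenameB : ∀ (σ₀ σ : Equiv.Perm (Fin n)) (p : Fin t × Fin q),
      rename (fun p : Fin n × Fin m => (σ₀ p.1, p.2)) (Bf σ p) = Bf (σ₀ * σ) p := by
    intro σ₀ σ p
    rw [hBf]
    simp only [map_neg, rename_monomial]
    congr 2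
    rw [hw]
    simp only
    rw [← Finsupp.mapDomain_comp]
    rfl
  -- the vanishing sum
  have hzero : ∑ σ : Equiv.Perm (Fin n), ∏ p : Fin t × Fin q, (A p + Bf σ p) = 0 := by
    apply Finset.sum_eq_zero
    intro σ _
    obtain ⟨s, l, he⟩ := exists_hit htq i hi (fun l => σ (α l)) (σ.injective.comp hα)
    apply Finset.prod_eq_zero (Finset.mem_univ (s, l))
    rw [hA, hBf]
    simp only
    rw [he]
    exact add_neg_cancel _
  -- expand and swap
  set inner : Finset (Fin t × Fin q) → MvPolynomial (Fin n × Fin m) k :=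
    fun S => ∑ σ : Equiv.Perm (Fin n), ∏ p ∈ Finset.univ \ S, Bf σ p with hinner
  have hswap : ∑ S ∈ (Finset.univ : Finset (Fin t × Fin q)).powerset,
      (∏ p ∈ S, A p) * inner S = 0 := by
    rw [hinner]
    calc ∑ S ∈ (Finset.univ : Finset (Fin t × Fin q)).powerset,
          (∏ p ∈ S, A p) * (∑ σ : Equiv.Perm (Fin n), ∏ p ∈ Finset.univ \ S, Bf σ p)
        = ∑ S ∈ (Finset.univ : Finset (Fin t × Fin q)).powerset,
            ∑ σ : Equiv.Perm (Fin n), (∏ p ∈ S, A p) * ∏ p ∈ Finset.univ \ S, Bf σ p := by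
          exact Finset.sum_congr rfl fun S _ => Finset.mul_sum _ _ _
      _ = ∑ σ : Equiv.Perm (Fin n), ∑ S ∈ (Finset.univ : Finset (Fin t × Fin q)).powerset,
            (∏ p ∈ S, A p) * ∏ p ∈ Finset.univ \ S, Bf σ p := Finset.sum_comm
      _ = ∑ σ : Equiv.Perm (Fin n), ∏ p : Fin t × Fin q, (A p + Bf σ p) := by
          exact Finset.sum_congr rfl fun σ _ => (Finset.prod_add _ _ _).symm
      _ = 0 := hzero
  -- the S = univ term
  have huniv : inner Finset.univ = ((n.factorial : MvPolynomial (Fin n × Fin m) k)) := by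
    rw [hinner]
    simp only [Finset.sdiff_self, Finset.prod_empty]
    rw [Finset.sum_const, Finset.card_univ, Fintype.card_perm, Fintype.card_fin,
      nsmul_eq_mul, mul_one]
  -- each other inner S is in SymSet
  have hmemS : ∀ S ∈ ((Finset.univ : Finset (Fin t × Fin q)).powerset).erase Finset.univ,
      inner S ∈ SymSet k n m := by
    intro S hS
    rw [Finset.mem_erase] at hS
    obtain ⟨hSne, -⟩ := hS
    have hne : (Finset.univ \ S).Nonempty := by
      rw [Finset.sdiff_nonempty]
      intro hsub
      exact hSne (Finset.eq_univ_iff_forall.mpr fun x => hsub (Finset.mem_univ x))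
    refine ⟨?_, ?_, ?_⟩
    · intro σ₀
      rw [hinner]
      rw [map_sum]
      calc ∑ σ : Equiv.Perm (Fin n),
            rename (fun p : Fin n × Fin m => (σ₀ p.1, p.2)) (∏ p ∈ Finset.univ \ S, Bf σ p)
          = ∑ σ : Equiv.Perm (Fin n), ∏ p ∈ Finset.univ \ S, Bf (σ₀ * σ) p := by
            refine Finset.sum_congr rfl fun σ _ => ?_
            rw [map_prod]
            exact Finset.prod_congr rfl fun p _ => hrenameB σ₀ σ p
        _ = ∑ σ : Equiv.Perm (Fin n), ∏ p ∈ Finset.univ \ S, Bf σ p := by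
            exact Fintype.sum_bijective (fun σ => σ₀ * σ) (Group.mulLeft_bijective σ₀)
              _ _ (fun σ => rfl)
    · rw [hinner, map_sum]
      apply Finset.sum_eq_zero
      intro σ _
      obtain ⟨p₀, hp₀⟩ := hne
      rw [map_prod]
      apply Finset.prod_eq_zero hp₀
      rw [hBf]
      simp only [map_neg, neg_eq_zero, constantCoeff_monomial]
      rw [if_neg]
      rw [hw]
      simp only
      exact mapDomain_col_ne_zero _ (hz p₀)
    · rw [hinner]
      refine le_trans (totalDegree_finset_sum _ _) ?_
      apply Finset.sup_le
      intro σ _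
      have hb : ∀ p : Fin t × Fin q, (Bf σ p).totalDegree ≤ ∑ j, z p j := by
        intro p
        rw [hBf]
        simp only
        rw [totalDegree_neg, totalDegree_monomial _ one_ne_zero, hw]
        simp only
        rw [mapDomain_col_degree]
      calc (∏ p ∈ Finset.univ \ S, Bf σ p).totalDegree
          ≤ ∑ p ∈ Finset.univ \ S, (Bf σ p).totalDegree := totalDegree_finset_prod _ _
        _ ≤ ∑ p ∈ Finset.univ \ S, (∑ j, z p j) := Finset.sum_le_sum fun p _ => hb p
        _ ≤ ∑ p : Fin t × Fin q, (∑ j, z p j) :=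
            Finset.sum_le_sum_of_subset Finset.sdiff_subset
        _ ≤ n.choose 2 + 1 := hdeg
  -- isolate the univ term
  have hU : Finset.univ ∈ (Finset.univ : Finset (Fin t × Fin q)).powerset :=
    Finset.mem_powerset_self _
  have hsplit := Finset.add_sum_erase _ (fun S => (∏ p ∈ S, A p) * inner S) hU
  rw [hswap] at hsplit
  have hrest : ∑ S ∈ ((Finset.univ : Finset (Fin t × Fin q)).powerset).erase Finset.univ,
      (∏ p ∈ S, A p) * inner S ∈ Ideal.span (SymSet k n m) := by
    apply Ideal.sum_mem
    intro S hS
    exact Ideal.mul_mem_left _ _ (Ideal.subset_span (hmemS S hS))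
  have hmain : (∏ p : Fin t × Fin q, A p) * ((n.factorial : MvPolynomial (Fin n × Fin m) k))
      ∈ Ideal.span (SymSet k n m) := by
    have heq : (∏ p : Fin t × Fin q, A p) * ((n.factorial : MvPolynomial (Fin n × Fin m) k))
        = - ∑ S ∈ ((Finset.univ : Finset (Fin t × Fin q)).powerset).erase Finset.univ,
            (∏ p ∈ S, A p) * inner S := by
      rw [← huniv]
      linear_combination hsplit
    rw [heq]
    exact neg_mem hrest
  have hfin : (∏ p : Fin t × Fin q, A p) ∈ Ideal.span (SymSet k n m) := by
    have hCeq : (C ((n.factorial : k)⁻¹) : MvPolynomial (Fin n × Fin m) k) *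
        ((∏ p : Fin t × Fin q, A p) * ((n.factorial : MvPolynomial (Fin n × Fin m) k)))
        = ∏ p : Fin t × Fin q, A p := by
      rw [show ((n.factorial : MvPolynomial (Fin n × Fin m) k)) = C ((n.factorial : k)) from
        (map_natCast (C : k →+* MvPolynomial (Fin n × Fin m) k) _).symm]
      rw [mul_comm (∏ p : Fin t × Fin q, A p) _, ← mul_assoc, ← C_mul,
        inv_mul_cancel₀ hn, C_1, one_mul]
    rw [← hCeq]
    exact Ideal.mul_mem_left _ _ hmain
  have hprod : (∏ p : Fin t × Fin q, A p)
      = monomial (∑ p : Fin t × Fin q, Finsupp.mapDomain (fun j => (i p.1, j)) (z p)) (1:k) := by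
    rw [hA]
    simp only
    exact prod_monomial_one Finset.univ _
  rw [← hprod]
  exact hfin


lemma monomial_mem (k : Type) [Field k] (n m : ℕ) (hn : ((n.factorial : k)) ≠ 0)
    (u : (Fin n × Fin m) →₀ ℕ) (hdeg : n.choose 2 + 1 ≤ ∑ p, u p) :
    (monomial u (1:k)) ∈ Ideal.span (SymSet k n m) := by
  classical
  obtain ⟨v, hvu, hvs⟩ := exists_le_sum_eq u (n.choose 2 + 1) hdeg
  suffices hv : (monomial v (1:k)) ∈ Ideal.span (SymSet k n m) by
    have heq : monomial u (1:k) = monomial (u - v) (1:k) * monomial v 1 := by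
      rw [monomial_mul, mul_one, tsub_add_cancel_of_le hvu]
    rw [heq]
    exact Ideal.mul_mem_left _ _ hv
  set c : Fin n → ℕ := fun a => ∑ j, v (a, j) with hc
  have hcsum : ∑ a, c a = n.choose 2 + 1 := by
    rw [← hvs]
    exact (Fintype.sum_prod_type _).symm
  obtain ⟨T, hTne, hT⟩ := exists_heavy c (by omega)
  set t := T.card with ht
  have htpos : 1 ≤ t := Finset.card_pos.mpr hTne
  have htlen : t ≤ n := by
    have h1 := Finset.card_le_univ T
    simp only [Finset.card_univ, Fintype.card_fin] at h1
    omega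
  set q := n + 1 - t with hq
  have htq : n + 1 = t + q := by omega
  set iemb := T.orderIsoOfFin ht.symm with hiemb
  set i : Fin t → Fin n := fun s => (iemb s : Fin n) with hidef
  have hiinj : Function.Injective i := by
    intro s1 s2 h12
    exact iemb.injective (Subtype.ext h12)
  have himem : ∀ s, i s ∈ T := fun s => (iemb s).2
  have hqn : q ≤ n := by omega
  set α : Fin q → Fin n := fun l => Fin.castLE hqn l with hαdef
  have hαinj : Function.Injective α := Fin.castLE_injective hqn
  set ecol : Fin t → (Fin m →₀ ℕ) :=
    fun s => Finsupp.equivFunOnFinite.symm (fun j => v (i s, j)) with hecoldef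
  have hecol : ∀ s j, ecol s j = v (i s, j) := fun s j => rfl
  have hcol : ∀ s : Fin t, q ≤ ∑ j, ecol s j := by
    intro s
    have h1 := hT (i s) (himem s)
    have h2 : c (i s) = ∑ j, v (i s, j) := rfl
    have h3 : ∑ j, ecol s j = ∑ j, v (i s, j) :=
      Finset.sum_congr rfl fun j _ => hecol s j
    omega
  choose zz hzzne hzzle using fun s : Fin t => exists_split q (ecol s) (hcol s)
  set z : Fin t × Fin q → (Fin m →₀ ℕ) := fun p => zz p.1 p.2 with hzdef
  have hTimage : Finset.univ.image i = T := by
    apply Finset.eq_of_subset_of_card_le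
    · intro a ha
      rcases Finset.mem_image.mp ha with ⟨s, -, rfl⟩
      exact himem s
    · rw [Finset.card_image_of_injective _ hiinj, Finset.card_univ, Fintype.card_fin]
  have hdegz : ∑ p : Fin t × Fin q, (∑ j, z p j) ≤ n.choose 2 + 1 := by
    calc ∑ p : Fin t × Fin q, (∑ j, z p j)
        = ∑ s : Fin t, ∑ l : Fin q, ∑ j, zz s l j := Fintype.sum_prod_type _
      _ = ∑ s : Fin t, ∑ j, (∑ l : Fin q, zz s l) j := by
          refine Finset.sum_congr rfl fun s _ => ?_
          rw [Finset.sum_comm]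
          exact Finset.sum_congr rfl fun j _ => (Finsupp.finset_sum_apply _ _ _).symm
      _ ≤ ∑ s : Fin t, ∑ j, v (i s, j) := by
          refine Finset.sum_le_sum fun s _ => Finset.sum_le_sum fun j _ => ?_
          exact le_trans (Finsupp.le_def.mp (hzzle s) j) (le_of_eq (hecol s j))
      _ = ∑ a ∈ T, c a := by
          rw [← hTimage, Finset.sum_image (fun x _ y _ h => hiinj h)]
      _ ≤ ∑ a, c a := Finset.sum_le_sum_of_subset (Finset.subset_univ T)
      _ = n.choose 2 + 1 := hcsum
  have hW : (∑ p : Fin t × Fin q, Finsupp.mapDomain (fun j => (i p.1, j)) (z p)) ≤ v := by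
    rw [Finsupp.le_def]
    rintro ⟨a, jj⟩
    rw [Finsupp.finset_sum_apply]
    have happ : ∀ p : Fin t × Fin q,
        (Finsupp.mapDomain (fun j : Fin m => (i p.1, j)) (z p)) (a, jj)
        = if i p.1 = a then z p jj else 0 := by
      intro p
      rcases eq_or_ne (i p.1) a with he | hne
      · subst he
        rw [if_pos rfl]
        exact Finsupp.mapDomain_apply (injcol _) _ jj
      · rw [if_neg hne]
        apply Finsupp.mapDomain_notin_range
        rintro ⟨j, hj⟩
        exact hne (congrArg Prod.fst hj)
    rw [Finset.sum_congr rfl fun p _ => happ p]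
    by_cases haT : a ∈ T
    · set s₀ := iemb.symm ⟨a, haT⟩ with hs₀
      have his₀ : i s₀ = a := by
        rw [hidef]
        simp only [hs₀, OrderIso.apply_symm_apply]
      calc ∑ p : Fin t × Fin q, (if i p.1 = a then z p jj else 0)
          = ∑ s : Fin t, ∑ l : Fin q, (if i s = a then zz s l jj else 0) :=
            Fintype.sum_prod_type _
        _ = ∑ s : Fin t, (if i s = a then ∑ l : Fin q, zz s l jj else 0) := by
            refine Finset.sum_congr rfl fun s _ => ?_
            split <;> simp
        _ = ∑ l : Fin q, zz s₀ l jj := by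
            rw [Finset.sum_eq_single s₀]
            · rw [if_pos his₀]
            · intro s _ hss
              rw [if_neg]
              intro hia
              exact hss (hiinj (hia.trans his₀.symm))
            · intro habs
              exact absurd (Finset.mem_univ s₀) habs
        _ = (∑ l : Fin q, zz s₀ l) jj := (Finsupp.finset_sum_apply _ _ _).symm
        _ ≤ v (i s₀, jj) :=
            le_trans (Finsupp.le_def.mp (hzzle s₀) jj) (le_of_eq (hecol s₀ jj))
        _ = v (a, jj) := by rw [his₀]
    · refine le_trans (le_of_eq (Finset.sum_eq_zero fun p _ => ?_)) (Nat.zero_le _)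
      rw [if_neg]
      intro hia
      exact haT (hia ▸ himem p.1)
  have hkey := key k n m hn htq i hiinj α hαinj z (fun p => hzzne p.1 p.2) hdegz
  have heq2 : monomial v (1:k)
      = monomial (v - ∑ p : Fin t × Fin q, Finsupp.mapDomain (fun j => (i p.1, j)) (z p)) (1:k)
        * monomial (∑ p : Fin t × Fin q, Finsupp.mapDomain (fun j => (i p.1, j)) (z p)) 1 := by
    rw [monomial_mul, mul_one, tsub_add_cancel_of_le hW]
  rw [heq2]
  exact Ideal.mul_mem_left _ _ hkey


lemma sum_mapDomain_univ {A B : Type} [Fintype A] [Fintype B] (f : A → B) (u : A →₀ ℕ) :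
    ∑ p, (Finsupp.mapDomain f u) p = ∑ p, u p := by
  have h1 : (Finsupp.mapDomain f u).sum (fun _ e => e) = u.sum (fun _ e => e) :=
    Finsupp.sum_mapDomain_index (fun _ => rfl) (fun _ _ _ => rfl)
  rwa [Finsupp.sum_fintype _ _ (fun _ => rfl), Finsupp.sum_fintype _ _ (fun _ => rfl)] at h1

end HilbertIdealAux

open HilbertIdealAux

/-- For a permutation group `G ≤ Sₙ` acting on `V = kⁿ` (diagonally on `Vᵐ`),
with `char k = 0` or `char k > n`, the Hilbert ideal `I(G,Vᵐ)` (the ideal generated by the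
`G`-invariant polynomials of positive degree) is generated by `G`-invariant polynomials of
degree at most `binom(n,2) + 1`. -/
theorem hilbert_ideal_generated_in_small_degree (k : Type) [Field k] (n m : ℕ)
    (hchar : ringChar k = 0 ∨ n < ringChar k)
    (G : Subgroup (Equiv.Perm (Fin n))) :
    ∃ S : Set (MvPolynomial (Fin n × Fin m) k),
      (∀ f ∈ S, (∀ g ∈ G, rename (fun p : Fin n × Fin m => (g⁻¹ p.1, p.2)) f = f) ∧
        f.totalDegree ≤ n.choose 2 + 1) ∧
      Ideal.span S = Ideal.span {h : MvPolynomial (Fin n × Fin m) k |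
        (∀ g ∈ G, rename (fun p : Fin n × Fin m => (g⁻¹ p.1, p.2)) h = h) ∧
        constantCoeff h = 0} := by
  classical
  haveI : Fintype ↥G := Fintype.ofFinite ↥G
  have hnfac : ((n.factorial : k)) ≠ 0 :=
    cast_ne_zero_of_dvd_factorial k n hchar n.factorial_pos dvd_rfl
  set N := Fintype.card ↥G with hN
  have hNdvd : N ∣ n.factorial := by
    have h1 := Subgroup.card_subgroup_dvd_card G
    rwa [Nat.card_eq_fintype_card, Nat.card_eq_fintype_card, Fintype.card_perm,
      Fintype.card_fin] at h1
  have hNpos : 0 < N := Fintype.card_pos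
  have hNk : ((N : k)) ≠ 0 := cast_ne_zero_of_dvd_factorial k n hchar hNpos hNdvd
  set Orb : ((Fin n × Fin m) →₀ ℕ) → MvPolynomial (Fin n × Fin m) k :=
    fun u => ∑ g : ↥G,
      rename (fun p : Fin n × Fin m => ((g : Equiv.Perm (Fin n)) p.1, p.2)) (monomial u 1)
    with hOrb
  set OrbSet : Set (MvPolynomial (Fin n × Fin m) k) :=
    {f | ∃ u : (Fin n × Fin m) →₀ ℕ, u ≠ 0 ∧ (∑ p, u p) ≤ n.choose 2 + 1 ∧ f = Orb u}
    with hOrbSet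
  have hrr : ∀ (σ τ : Equiv.Perm (Fin n)) (f : MvPolynomial (Fin n × Fin m) k),
      rename (fun p : Fin n × Fin m => (σ p.1, p.2))
        (rename (fun p : Fin n × Fin m => (τ p.1, p.2)) f)
      = rename (fun p : Fin n × Fin m => ((σ * τ) p.1, p.2)) f := by
    intro σ τ f
    rw [rename_rename]
    rfl
  have hOrbInv : ∀ (u : (Fin n × Fin m) →₀ ℕ), ∀ g ∈ G,
      rename (fun p : Fin n × Fin m => (g⁻¹ p.1, p.2)) (Orb u) = Orb u := by
    intro u g hg
    rw [hOrb]
    simp only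
    rw [map_sum]
    refine Fintype.sum_bijective (fun x : ↥G => (⟨g, hg⟩ : ↥G)⁻¹ * x)
      (Group.mulLeft_bijective _) _ _ ?_
    intro x
    rw [rename_rename]
    rfl
  have hOrbcc : ∀ u : (Fin n × Fin m) →₀ ℕ, u ≠ 0 → constantCoeff (Orb u) = 0 := by
    intro u hu
    rw [hOrb]
    simp only
    rw [map_sum]
    apply Finset.sum_eq_zero
    intro g' _
    rw [constantCoeff_rename, constantCoeff_monomial, if_neg hu]
  have hOrbdeg : ∀ u : (Fin n × Fin m) →₀ ℕ, (Orb u).totalDegree ≤ ∑ p, u p := by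
    intro u
    rw [hOrb]
    simp only
    refine le_trans (totalDegree_finset_sum _ _) ?_
    apply Finset.sup_le
    intro g' _
    refine le_trans (totalDegree_rename_le _ _) ?_
    rw [totalDegree_monomial _ (one_ne_zero : (1:k) ≠ 0)]
    exact le_of_eq (Finsupp.sum_fintype _ _ fun _ => rfl)
  refine ⟨SymSet k n m ∪ OrbSet, ?_, ?_⟩
  · rintro f (hf | hf)
    · obtain ⟨hs1, hs2, hs3⟩ := hf
      exact ⟨fun g _ => hs1 g⁻¹, hs3⟩
    · obtain ⟨u, hu0, hud, rfl⟩ := hf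
      refine ⟨fun g hg => hOrbInv u g hg, le_trans (hOrbdeg u) hud⟩
  · apply le_antisymm
    · apply Ideal.span_mono
      rintro f (hf | hf)
      · obtain ⟨hs1, hs2, hs3⟩ := hf
        exact ⟨fun g _ => hs1 g⁻¹, hs2⟩
      · obtain ⟨u, hu0, hud, rfl⟩ := hf
        exact ⟨fun g hg => hOrbInv u g hg, hOrbcc u hu0⟩
    · rw [Ideal.span_le]
      rintro h ⟨hinv, hcc⟩
      have hGfix : ∀ g' : ↥G,
          rename (fun p : Fin n × Fin m => ((g' : Equiv.Perm (Fin n)) p.1, p.2)) h = h := by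
        intro g'
        have h1 := hinv ((g' : Equiv.Perm (Fin n)))⁻¹ (G.inv_mem g'.2)
        simpa only [inv_inv] using h1
      have hsum1 : ∑ g' : ↥G,
          rename (fun p : Fin n × Fin m => ((g' : Equiv.Perm (Fin n)) p.1, p.2)) h
          = (N : MvPolynomial (Fin n × Fin m) k) * h := by
        rw [Finset.sum_congr rfl fun g' _ => hGfix g']
        rw [Finset.sum_const, Finset.card_univ, nsmul_eq_mul]
      have hterm : ∀ g' : ↥G,
          rename (fun p : Fin n × Fin m => ((g' : Equiv.Perm (Fin n)) p.1, p.2)) h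
          = ∑ u ∈ h.support, C (coeff u h) *
              rename (fun p : Fin n × Fin m => ((g' : Equiv.Perm (Fin n)) p.1, p.2))
                (monomial u 1) := by
        intro g'
        conv_lhs => rw [as_sum h]
        rw [map_sum]
        refine Finset.sum_congr rfl fun u _ => ?_
        rw [rename_monomial, rename_monomial, C_mul_monomial, mul_one]
      have hsum2 : (N : MvPolynomial (Fin n × Fin m) k) * h
          = ∑ u ∈ h.support, C (coeff u h) * Orb u := by
        rw [← hsum1, Finset.sum_congr rfl fun g' _ => hterm g', Finset.sum_comm]
        refine Finset.sum_congr rfl fun u _ => ?_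
        rw [hOrb]
        simp only
        rw [Finset.mul_sum]
      have hmemN : (N : MvPolynomial (Fin n × Fin m) k) * h
          ∈ Ideal.span (SymSet k n m ∪ OrbSet) := by
        rw [hsum2]
        apply Ideal.sum_mem
        intro u hu
        have hu0 : u ≠ 0 := by
          intro h0
          apply MvPolynomial.mem_support_iff.mp hu
          rw [h0]
          exact hcc
        by_cases hle : (∑ p, u p) ≤ n.choose 2 + 1
        · refine Ideal.mul_mem_left _ _ (Ideal.subset_span ?_)
          exact Or.inr ⟨u, hu0, hle, rfl⟩
        · apply Ideal.mul_mem_left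
          rw [hOrb]
          simp only
          apply Ideal.sum_mem
          intro g' _
          rw [rename_monomial]
          refine Ideal.span_mono Set.subset_union_left ?_
          apply monomial_mem k n m hnfac
          rw [sum_mapDomain_univ]
          omega
      have hfinal : h = C ((N : k)⁻¹) * ((N : MvPolynomial (Fin n × Fin m) k) * h) := by
        rw [show ((N : MvPolynomial (Fin n × Fin m) k)) = C ((N : k)) from
          (map_natCast (C : k →+* MvPolynomial (Fin n × Fin m) k) _).symm]
        rw [← mul_assoc, ← C_mul, inv_mul_cancel₀ hNk, C_1, one_mul]
      rw [hfinal]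
      exact Ideal.mul_mem_left _ _ hmemN
end

section
/- Assume char(k) = 0. Let M and M' be monomials in k[x_1,…,x_n] with M' < M in the lexicographic order with x_1 > x_2 > … > x_n. Then for every m-tuple k = (k_1,…,k_m) ∈ ℕ^m for which Pol_k(M) and Pol_k(M') are nonzero, the leading monomial of Pol_k(M') is strictly smaller than the leading monomial of Pol_k(M) with respect to the lexicographic order on k[x_i^{(j)}] with x_1^{(1)} > x_1^{(2)} > … > x_1^{(m)} > x_2^{(1)} > … > x_2^{(m)} > … > x_n^{(m)}. -/
open MvPolynomial

/-- The polarization `Pol_κ(f)`: the coefficient of `t₁^{κ₁} ⋯ t_m^{κ_m}` in `Φ(f)` where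
`Φ : k[x₁,…,xₙ] → k[x_i^{(j)}][t₁,…,t_m]` is the algebra map sending `x_i ↦ Σ_j x_i^{(j)} t_j`.
The variables `x_i^{(j)}` are indexed by `emb i j : σ`. -/
noncomputable def Pol {k : Type*} [CommSemiring k] {n m : ℕ} {σ : Type*}
    (emb : Fin n → Fin m → σ) (f : MvPolynomial (Fin n) k) (κ : Fin m → ℕ) :
    MvPolynomial σ k :=
  MvPolynomial.coeff (Finsupp.equivFunOnFinite.symm κ)
    (MvPolynomial.aeval
      (fun i => ∑ j : Fin m, (MvPolynomial.C (MvPolynomial.X (emb i j)) * MvPolynomial.X j :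
        MvPolynomial (Fin m) (MvPolynomial σ k))) f)

/-- The leading monomial (exponent vector) of a polynomial with respect to the lexicographic
order where variables with smaller index in `σ` are larger (junk value `0` for `f = 0`). -/
noncomputable def leadM {k : Type*} [CommSemiring k] {σ : Type*}
    [LinearOrder σ] (f : MvPolynomial σ k) : Lex (σ →₀ ℕ) :=
  letI : DecidableEq (Lex (σ →₀ ℕ)) := Classical.decEq _
  WithBot.unbotD (toLex 0) ((f.support.image (toLex : (σ →₀ ℕ) → Lex (σ →₀ ℕ))).max)

namespace PolAux
open MvPolynomial Finsupp


/-- the greedy matrix entry built from cumulative sums `A` (rows) and `K` (cols). -/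
def gg (A K : ℕ → ℕ) (i j : ℕ) : ℕ :=
  (min (K (j+1)) (A (i+1)) + min (K j) (A i)) - (min (K j) (A (i+1)) + min (K (j+1)) (A i))

lemma gg_symm (A K : ℕ → ℕ) (i j : ℕ) : gg A K i j = gg K A j i := by
  unfold gg
  rw [min_comm (K (j+1)) (A (i+1)), min_comm (K j) (A i)]
  omega

/-- prefix row sum of the greedy matrix. -/
lemma gg_row_prefix (A K : ℕ → ℕ) (hA : Monotone A) (hK : Monotone K) (hK0 : K 0 = 0)
    (i J : ℕ) :
    ∑ j ∈ Finset.range J, gg A K i j = min (K J) (A (i+1)) - min (K J) (A i) := by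
  have hmono : Monotone (fun j => min (K j) (A (i+1)) - min (K j) (A i)) := by
    intro x y hxy
    have := hK hxy
    have := hA (by omega : i ≤ i + 1)
    simp only
    omega
  calc ∑ j ∈ Finset.range J, gg A K i j
      = ∑ j ∈ Finset.range J, ((fun j => min (K j) (A (i+1)) - min (K j) (A i)) (j+1)
          - (fun j => min (K j) (A (i+1)) - min (K j) (A i)) j) := by
        apply Finset.sum_congr rfl
        intro j _
        have h1 := hK (by omega : j ≤ j + 1)
        have h2 := hA (by omega : i ≤ i + 1)
        unfold gg
        simp only
        omega
    _ = _ := by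
        rw [Finset.sum_range_tsub hmono J]
        simp [hK0]

lemma gg_col_prefix (A K : ℕ → ℕ) (hA : Monotone A) (hK : Monotone K) (hA0 : A 0 = 0)
    (j I : ℕ) :
    ∑ i ∈ Finset.range I, gg A K i j = min (K (j+1)) (A I) - min (K j) (A I) := by
  have h : ∀ i, gg A K i j = gg K A j i := fun i => gg_symm A K i j
  simp only [h]
  rw [gg_row_prefix K A hK hA hA0 j I]
  rw [min_comm (A I) (K (j+1)), min_comm (A I) (K j)]

lemma gg_row_sum (A K : ℕ → ℕ) (hA : Monotone A) (hK : Monotone K) (hK0 : K 0 = 0) (i m : ℕ)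
    (h : A (i+1) ≤ K m) : ∑ j ∈ Finset.range m, gg A K i j = A (i+1) - A i := by
  rw [gg_row_prefix A K hA hK hK0 i m]
  have := hA (by omega : i ≤ i + 1)
  omega

lemma gg_col_sum (A K : ℕ → ℕ) (hA : Monotone A) (hK : Monotone K) (hA0 : A 0 = 0) (j n : ℕ)
    (h : K (j+1) ≤ A n) : ∑ i ∈ Finset.range n, gg A K i j = K (j+1) - K j := by
  rw [gg_col_prefix A K hA hK hA0 j n]
  have := hK (by omega : j ≤ j + 1)
  omega

/-- greedy dominance. -/
lemma gg_max (A K : ℕ → ℕ) (hA : Monotone A) (hK : Monotone K) (i j x : ℕ)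
    (hrow : x + (min (K j) (A (i+1)) - min (K j) (A i)) ≤ A (i+1) - A i)
    (hcol : x + (min (K (j+1)) (A i) - min (K j) (A i)) ≤ K (j+1) - K j) :
    x ≤ gg A K i j := by
  have h1 := hA (by omega : i ≤ i + 1)
  have h2 := hK (by omega : j ≤ j + 1)
  unfold gg
  omega

/-- the comparison at the first column where the greedy rows differ. -/
lemma gg_compare (A A' K : ℕ → ℕ) (hA : Monotone A) (hA' : Monotone A') (hK : Monotone K)
    (hK0 : K 0 = 0)
    (i₀ : ℕ) (hEq : ∀ i ≤ i₀, A' i = A i) (hlt : A' (i₀+1) < A (i₀+1))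
    (m : ℕ) (hKm : A' (i₀+1) < K m) (hKstab : ∀ j ≥ m, K j = K m) :
    ∃ j₀ < m, (gg A' K i₀ j₀ < gg A K i₀ j₀) ∧ ∀ j < j₀, gg A' K i₀ j = gg A K i₀ j := by
  have hex : ∃ j, A' (i₀+1) < K (j+1) := by
    rcases Nat.eq_zero_or_pos m with hm | hm
    · exact ⟨0, by rw [hKstab 1 (by omega)]; omega⟩
    · exact ⟨m - 1, by rw [show m - 1 + 1 = m by omega]; exact hKm⟩
  classical
  set j₀ := Nat.find hex with hj₀
  have hfound : A' (i₀+1) < K (j₀+1) := Nat.find_spec hex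
  have hminim : ∀ j < j₀, ¬ A' (i₀+1) < K (j+1) := fun j hj => Nat.find_min hex hj
  have hKj₀ : K j₀ ≤ A' (i₀+1) := by
    cases' Nat.eq_zero_or_pos j₀ with h h
    · rw [h, hK0]; omega
    · have h1 := hminim (j₀ - 1) (by omega)
      rw [show j₀ - 1 + 1 = j₀ by omega] at h1
      omega
  have hj₀m : j₀ < m := by
    by_contra h
    push_neg at h
    have h2 : K j₀ = K m := by
      rcases Nat.lt_or_ge j₀ m with h' | h'
      · omega
      · exact hKstab j₀ h'
    omega
  have hEi := hEq i₀ le_rfl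
  have hAm := hA (by omega : i₀ ≤ i₀ + 1)
  have hA'm := hA' (by omega : i₀ ≤ i₀ + 1)
  refine ⟨j₀, hj₀m, ?_, ?_⟩
  · unfold gg
    have h2 := hK (by omega : j₀ ≤ j₀ + 1)
    omega
  · intro j hj
    have hKj : K (j+1) ≤ A' (i₀+1) := by have := hminim j hj; omega
    unfold gg
    have h2 := hK (by omega : j ≤ j + 1)
    omega




variable {n m : ℕ}

abbrev σt (n m : ℕ) := Lex (Fin n × Fin m)

noncomputable def phi (n m : ℕ) (i : Fin n) : MvPolynomial (Fin m) (MvPolynomial (σt n m) ℕ) :=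
  ∑ j : Fin m, MvPolynomial.C (MvPolynomial.X (toLex (i, j))) * MvPolynomial.X j

lemma sum_ne_zero_iff {ι : Type*} {s : Finset ι} {f : ι → ℕ} :
    (∑ i ∈ s, f i) ≠ 0 ↔ ∃ i ∈ s, f i ≠ 0 := by
  rw [Ne, Finset.sum_eq_zero_iff]
  push_neg
  rfl

lemma emb_inj (i : Fin n) : Function.Injective (fun j : Fin m => toLex (i, j)) := by
  intro x y h
  have := toLex.injective h
  simpa using this

lemma hmd (κ₁ : Fin m →₀ ℕ) (i i' : Fin n) (j : Fin m) :
    (Finsupp.mapDomain (fun j => toLex (i, j)) κ₁) (toLex (i', j)) =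
      if i' = i then κ₁ j else 0 := by
  split_ifs with h
  · subst h
    exact Finsupp.mapDomain_apply (emb_inj _) κ₁ j
  · apply Finsupp.mapDomain_notin_range
    rintro ⟨j', hj'⟩
    apply h
    have := toLex.injective hj'
    exact (Prod.mk.injEq _ _ _ _ |>.mp this).1.symm

lemma NZ_mul {p q : MvPolynomial (Fin m) (MvPolynomial (σt n m) ℕ)}
    {κ : Fin m →₀ ℕ} {d : σt n m →₀ ℕ} :
    coeff d (coeff κ (p * q)) ≠ 0 ↔ ∃ κ₁ κ₂ d₁ d₂, κ₁ + κ₂ = κ ∧ d₁ + d₂ = d ∧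
      coeff d₁ (coeff κ₁ p) ≠ 0 ∧ coeff d₂ (coeff κ₂ q) ≠ 0 := by
  rw [coeff_mul, MvPolynomial.coeff_sum]
  simp_rw [coeff_mul]
  rw [sum_ne_zero_iff]
  constructor
  · rintro ⟨x, hx, hne⟩
    rw [sum_ne_zero_iff] at hne
    obtain ⟨y, hy, hne⟩ := hne
    rw [Finset.HasAntidiagonal.mem_antidiagonal] at hx hy
    rw [Ne, Nat.mul_eq_zero, not_or] at hne
    exact ⟨x.1, x.2, y.1, y.2, hx, hy, hne.1, hne.2⟩
  · rintro ⟨κ₁, κ₂, d₁, d₂, hκ, hd, h1, h2⟩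
    exact ⟨(κ₁, κ₂), Finset.HasAntidiagonal.mem_antidiagonal.mpr hκ,
      sum_ne_zero_iff.mpr ⟨(d₁, d₂), Finset.HasAntidiagonal.mem_antidiagonal.mpr hd, Nat.mul_ne_zero h1 h2⟩⟩

lemma NZ_phi {i : Fin n} {κ : Fin m →₀ ℕ} {d : σt n m →₀ ℕ} :
    coeff d (coeff κ (phi n m i)) ≠ 0 ↔
      ∃ j : Fin m, κ = Finsupp.single j 1 ∧ d = Finsupp.single (toLex (i, j)) 1 := by
  classical
  have key : ∀ j : Fin m, coeff d (coeff κ (MvPolynomial.C (X (toLex (i, j))) * X j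
      : MvPolynomial (Fin m) (MvPolynomial (σt n m) ℕ))) =
      if κ = Finsupp.single j 1 ∧ d = Finsupp.single (toLex (i, j)) 1 then 1 else 0 := by
    intro j
    rw [coeff_C_mul, coeff_X']
    split_ifs with h1 h2 h3
    · rw [h2.2, mul_one, coeff_X']
      rw [if_pos rfl]
    · rw [mul_one, coeff_X', if_neg]
      intro hc
      exact h2 ⟨h1.symm, hc.symm⟩
    · exact absurd h3.1.symm h1
    · rw [mul_zero, coeff_zero]
  unfold phi
  rw [MvPolynomial.coeff_sum, MvPolynomial.coeff_sum]
  simp_rw [key]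
  rw [sum_ne_zero_iff]
  constructor
  · rintro ⟨j, -, hj⟩
    rw [ne_eq, ite_eq_right_iff, not_forall] at hj
    obtain ⟨hc, -⟩ := hj
    exact ⟨j, hc⟩
  · rintro ⟨j, h1, h2⟩
    exact ⟨j, Finset.mem_univ j, by rw [if_pos ⟨h1, h2⟩]; exact one_ne_zero⟩

lemma single_sum (j : Fin m) (c : ℕ) : ∑ j' : Fin m, (Finsupp.single j c) j' = c := by
  simp [Finsupp.single_apply]

lemma NZ_pow {i : Fin n} {e : ℕ} {κ : Fin m →₀ ℕ} {d : σt n m →₀ ℕ} :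
    coeff d (coeff κ ((phi n m i) ^ e)) ≠ 0 ↔
      (∑ j : Fin m, κ j) = e ∧ d = Finsupp.mapDomain (fun j => toLex (i, j)) κ := by
  induction e generalizing κ d with
  | zero =>
    rw [pow_zero]
    constructor
    · intro h
      have hκ : κ = 0 := by
        by_contra hκ
        rw [MvPolynomial.coeff_one, if_neg (fun h0 => hκ h0.symm)] at h
        simp at h
      subst hκ
      rw [MvPolynomial.coeff_one, if_pos rfl] at h
      have hd : d = 0 := by
        by_contra hd
        rw [MvPolynomial.coeff_one, if_neg (fun h0 => hd h0.symm)] at h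
        simp at h
      subst hd
      exact ⟨by simp, by simp⟩
    · rintro ⟨hsum, rfl⟩
      have hκ : κ = 0 := by
        ext j
        have h0 := (Finset.sum_eq_zero_iff.mp hsum) j (Finset.mem_univ j)
        simpa using h0
      subst hκ
      simp [MvPolynomial.coeff_one]
  | succ e ih =>
    rw [pow_succ, NZ_mul]
    constructor
    · rintro ⟨κ₁, κ₂, d₁, d₂, hκ, hd, h1, h2⟩
      obtain ⟨hs1, rfl⟩ := ih.mp h1
      obtain ⟨j, rfl, rfl⟩ := NZ_phi.mp h2
      subst hκ
      subst hd
      constructor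
      · simp only [Finsupp.add_apply, Finset.sum_add_distrib, hs1, single_sum]
      · rw [Finsupp.mapDomain_add, Finsupp.mapDomain_single]
    · rintro ⟨hsum, rfl⟩
      have hex : ∃ j : Fin m, κ j ≠ 0 := by
        by_contra hc
        push_neg at hc
        rw [Finset.sum_eq_zero (fun j _ => hc j)] at hsum
        omega
      obtain ⟨j, hj⟩ := hex
      have hle : Finsupp.single j 1 ≤ κ := Finsupp.single_le_iff.mpr (by omega)
      set κ₁' : Fin m →₀ ℕ := κ - Finsupp.single j 1 with hκdef
      have hκ : κ₁' + Finsupp.single j 1 = κ := tsub_add_cancel_of_le hle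
      have hs : (∑ j' : Fin m, κ₁' j') = e := by
        have h5 := congrArg (fun f : Fin m →₀ ℕ => ∑ j' : Fin m, f j') hκ
        simp only [Finsupp.add_apply, Finset.sum_add_distrib, single_sum] at h5
        omega
      refine ⟨κ₁', Finsupp.single j 1,
        Finsupp.mapDomain (fun j => toLex (i, j)) κ₁',
        Finsupp.single (toLex (i, j)) 1, hκ, ?_, ih.mpr ⟨hs, rfl⟩, NZ_phi.mpr ⟨j, rfl, rfl⟩⟩
      rw [← hκ, Finsupp.mapDomain_add, Finsupp.mapDomain_single]

lemma NZ_monomial (a : Fin n →₀ ℕ) :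
    ∀ (κ : Fin m →₀ ℕ) (d : σt n m →₀ ℕ),
    coeff d (coeff κ (MvPolynomial.aeval (phi n m) (monomial a (1 : ℕ)))) ≠ 0 ↔
      ((∀ i, ∑ j : Fin m, d (toLex (i, j)) = a i) ∧
       (∀ j, ∑ i : Fin n, d (toLex (i, j)) = κ j)) := by
  induction a using Finsupp.induction with
  | zero =>
    intro κ d
    rw [show (monomial (0 : Fin n →₀ ℕ) (1 : ℕ)) = 1 from rfl, map_one]
    constructor
    · intro h
      have hκ : κ = 0 := by
        by_contra hκ
        rw [MvPolynomial.coeff_one, if_neg (fun h0 => hκ h0.symm)] at h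
        simp at h
      subst hκ
      rw [MvPolynomial.coeff_one, if_pos rfl] at h
      have hd : d = 0 := by
        by_contra hd
        rw [MvPolynomial.coeff_one, if_neg (fun h0 => hd h0.symm)] at h
        simp at h
      subst hd
      simp
    · rintro ⟨h1, h2⟩
      have hd : d = 0 := by
        ext s
        have h0' : ∑ j : Fin m, d (toLex ((ofLex s).1, j)) = 0 := by simpa using h1 (ofLex s).1
        have h1' := Finset.sum_eq_zero_iff.mp h0' (ofLex s).2 (Finset.mem_univ _)
        simpa using h1'
      subst hd
      have hκ : κ = 0 := by
        ext j
        have := h2 j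
        simp only [Finsupp.coe_zero, Pi.zero_apply, Finset.sum_const_zero] at this
        simp [← this]
      subst hκ
      simp [MvPolynomial.coeff_one]
  | single_add i e a' hia he ih =>
    intro κ d
    have ha'i : a' i = 0 := Finsupp.notMem_support_iff.mp hia
    have hsplit : (monomial (Finsupp.single i e + a') (1 : ℕ)) =
        monomial (Finsupp.single i e) 1 * monomial a' 1 := by
      rw [monomial_mul, one_mul]
    rw [hsplit, map_mul, ← X_pow_eq_monomial, map_pow, aeval_X, NZ_mul]
    constructor
    · rintro ⟨κ₁, κ₂, d₁, d₂, hκ, hd, h1, h2⟩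
      obtain ⟨hs1, rfl⟩ := NZ_pow.mp h1
      obtain ⟨hrow, hcol⟩ := (ih κ₂ d₂).mp h2
      subst hκ
      subst hd
      constructor
      · intro i'
        simp only [Finsupp.add_apply, Finset.sum_add_distrib, hmd, hrow i']
        by_cases hii : i' = i
        · rw [Finset.sum_congr rfl (fun j _ => if_pos hii), hs1, hii,
            Finsupp.single_eq_same, ha'i]
        · rw [Finset.sum_congr rfl (fun j _ => if_neg hii), Finset.sum_const_zero, zero_add,
            Finsupp.single_apply, if_neg (fun hc : i = i' => hii hc.symm), zero_add]
      · intro j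
        simp only [Finsupp.add_apply, Finset.sum_add_distrib, hmd, hcol j]
        rw [Finset.sum_ite_eq' Finset.univ i (fun _ => κ₁ j)]
        simp
    · rintro ⟨hrow, hcol⟩
      set κ₁ : Fin m →₀ ℕ := Finsupp.equivFunOnFinite.symm (fun j => d (toLex (i, j))) with hκ₁
      have hκ₁app : ∀ j, κ₁ j = d (toLex (i, j)) := fun j => rfl
      set d₁ := Finsupp.mapDomain (fun j => toLex (i, j)) κ₁ with hd₁
      have hd₁app : ∀ (i' : Fin n) (j : Fin m), d₁ (toLex (i', j)) =
          if i' = i then d (toLex (i, j)) else 0 := by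
        intro i' j
        rw [hd₁, hmd]
        split_ifs <;> simp [hκ₁app]
      have hd₁le : d₁ ≤ d := by
        rw [Finsupp.le_def]
        intro s
        have : s = toLex ((ofLex s).1, (ofLex s).2) := rfl
        rw [this, hd₁app]
        split_ifs with h
        · subst h; exact le_rfl
        · exact Nat.zero_le _
      have hκ₁le : κ₁ ≤ κ := by
        rw [Finsupp.le_def]
        intro j
        rw [hκ₁app, ← hcol j]
        exact Finset.single_le_sum (f := fun i' => d (toLex (i', j)))
          (fun _ _ => Nat.zero_le _) (Finset.mem_univ i)
      refine ⟨κ₁, κ - κ₁, d₁, d - d₁, add_tsub_cancel_of_le hκ₁le,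
        add_tsub_cancel_of_le hd₁le, NZ_pow.mpr ⟨?_, rfl⟩, (ih _ _).mpr ⟨?_, ?_⟩⟩
      · have := hrow i
        simp only [hκ₁app]
        rw [this]
        simp [Finsupp.single_eq_same, ha'i]
      · intro i'
        simp only [Finsupp.tsub_apply]
        by_cases hii : i' = i
        · subst hii
          rw [Finset.sum_eq_zero, ha'i]
          intro j _
          rw [hd₁app, if_pos rfl]
          omega
        · have : ∀ j : Fin m, d (toLex (i', j)) - d₁ (toLex (i', j)) = d (toLex (i', j)) := by
            intro j
            rw [hd₁app, if_neg hii]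
            omega
          simp only [this]
          rw [hrow i']
          simp [Finsupp.single_apply, if_neg (fun hc : i = i' => hii hc.symm)]
      · intro j
        simp only [Finsupp.tsub_apply]
        rw [Finset.sum_tsub_distrib]
        · rw [hcol j]
          congr 1
          simp only [hd₁app]
          rw [Finset.sum_ite_eq' Finset.univ i (fun _ => d (toLex (i, j)))]
          simp [hκ₁app]
        · intro i' _
          rw [hd₁app]
          split_ifs with h
          · subst h; exact le_rfl
          · exact Nat.zero_le _




/-! ### padded cumulative sums -/

def pad (n : ℕ) (a : Fin n →₀ ℕ) : ℕ → ℕ := fun x => if h : x < n then a ⟨x, h⟩ else 0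

def acc (n : ℕ) (a : Fin n →₀ ℕ) : ℕ → ℕ := fun i => ∑ x ∈ Finset.range i, pad n a x

lemma pad_val (a : Fin n →₀ ℕ) (i : Fin n) : pad n a i.val = a i := by
  simp [pad]

lemma acc_mono (a : Fin n →₀ ℕ) : Monotone (acc n a) := by
  intro x y hxy
  exact Finset.sum_le_sum_of_subset (Finset.range_subset_range.mpr hxy)

lemma acc_zero (a : Fin n →₀ ℕ) : acc n a 0 = 0 := by simp [acc]

lemma acc_succ (a : Fin n →₀ ℕ) (i : Fin n) :
    acc n a (i.val + 1) = acc n a i.val + a i := by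
  simp only [acc]
  rw [Finset.sum_range_succ, pad_val]

lemma acc_stab (a : Fin n →₀ ℕ) (j : ℕ) (hj : j ≥ n) : acc n a j = acc n a n := by
  unfold acc
  rw [Finset.sum_subset (Finset.range_subset_range.mpr hj)]
  intro x _ hx
  rw [Finset.mem_range, not_lt] at hx
  simp [pad, Nat.not_lt.mpr hx]

lemma acc_top (a : Fin n →₀ ℕ) : acc n a n = ∑ i : Fin n, a i := by
  rw [acc, ← Fin.sum_univ_eq_sum_range (pad n a) n]
  exact Finset.sum_congr rfl fun i _ => pad_val a i

/-! ### the greedy matrix as a finsupp -/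

noncomputable def G (n m : ℕ) (a : Fin n →₀ ℕ) (κf : Fin m →₀ ℕ) : σt n m →₀ ℕ :=
  Finsupp.equivFunOnFinite.symm
    (fun s => gg (acc n a) (acc m κf) (ofLex s).1.val (ofLex s).2.val)

lemma G_apply (a : Fin n →₀ ℕ) (κf : Fin m →₀ ℕ) (i : Fin n) (j : Fin m) :
    G n m a κf (toLex (i, j)) = gg (acc n a) (acc m κf) i.val j.val := rfl

lemma G_row (a : Fin n →₀ ℕ) (κf : Fin m →₀ ℕ) (htot : acc n a n = acc m κf m) (i : Fin n) :
    ∑ j : Fin m, G n m a κf (toLex (i, j)) = a i := by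
  have h1 : ∑ j : Fin m, G n m a κf (toLex (i, j))
      = ∑ x ∈ Finset.range m, gg (acc n a) (acc m κf) i.val x := by
    rw [← Fin.sum_univ_eq_sum_range (fun x => gg (acc n a) (acc m κf) i.val x) m]
    exact Finset.sum_congr rfl fun x _ => rfl
  rw [h1, gg_row_sum _ _ (acc_mono a) (acc_mono κf) (acc_zero κf) i.val m ?hle]
  · have := acc_succ a i; omega
  case hle =>
    calc acc n a (i.val + 1) ≤ acc n a n := acc_mono a i.isLt
      _ = acc m κf m := htot

lemma G_col (a : Fin n →₀ ℕ) (κf : Fin m →₀ ℕ) (htot : acc n a n = acc m κf m) (j : Fin m) :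
    ∑ i : Fin n, G n m a κf (toLex (i, j)) = κf j := by
  have h1 : ∑ i : Fin n, G n m a κf (toLex (i, j))
      = ∑ x ∈ Finset.range n, gg (acc n a) (acc m κf) x j.val := by
    rw [← Fin.sum_univ_eq_sum_range (fun x => gg (acc n a) (acc m κf) x j.val) n]
    exact Finset.sum_congr rfl fun x _ => rfl
  rw [h1, gg_col_sum _ _ (acc_mono a) (acc_mono κf) (acc_zero a) j.val n ?hle]
  · have := acc_succ κf j; omega
  case hle =>
    calc acc m κf (j.val + 1) ≤ acc m κf m := acc_mono κf j.isLt
      _ = acc n a n := htot.symm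

/-- converting a range-indexed sum to a `Fin`-filter-indexed sum. -/
lemma filter_val_sum {N : ℕ} (J : ℕ) (hJ : J ≤ N) (f : ℕ → ℕ) :
    ∑ x ∈ Finset.range J, f x =
      ∑ j' ∈ Finset.univ.filter (fun j' : Fin N => j'.val < J), f j'.val := by
  calc ∑ x ∈ Finset.range J, f x
      = ∑ x ∈ Finset.range J, if x < J then f x else 0 :=
        Finset.sum_congr rfl fun x hx => (if_pos (Finset.mem_range.mp hx)).symm
    _ = ∑ x ∈ Finset.range N, if x < J then f x else 0 := by
        apply Finset.sum_subset (Finset.range_subset_range.mpr hJ)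
        intro x _ hx
        rw [if_neg]
        simpa [Finset.mem_range] using hx
    _ = ∑ j' : Fin N, if j'.val < J then f j'.val else 0 :=
        (Fin.sum_univ_eq_sum_range (fun x => if x < J then f x else 0) N).symm
    _ = ∑ j' ∈ Finset.univ.filter (fun j' : Fin N => j'.val < J), f j'.val :=
        (Finset.sum_filter _ _).symm

/-- maximality of the greedy matrix among feasible matrices, in the lex order. -/
lemma toLex_le_G (a : Fin n →₀ ℕ) (κf : Fin m →₀ ℕ) (d : σt n m →₀ ℕ)
    (hrow : ∀ i, ∑ j : Fin m, d (toLex (i, j)) = a i)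
    (hcol : ∀ j, ∑ i : Fin n, d (toLex (i, j)) = κf j) :
    toLex d ≤ toLex (G n m a κf) := by
  classical
  rcases eq_or_ne d (G n m a κf) with h | h
  · rw [h]
  set T : Finset (σt n m) := Finset.univ.filter (fun s => d s ≠ G n m a κf s) with hT
  have hTne : T.Nonempty := by
    obtain ⟨s, hs⟩ := Finsupp.ne_iff.mp h
    exact ⟨s, Finset.mem_filter.mpr ⟨Finset.mem_univ _, hs⟩⟩
  obtain ⟨s₀, hs₀T, hs₀min⟩ := Finset.exists_min_image T id hTne
  have hs₀ne : d s₀ ≠ G n m a κf s₀ := (Finset.mem_filter.mp hs₀T).2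
  have hbefore : ∀ t, t < s₀ → d t = G n m a κf t := by
    intro t ht
    by_contra hc
    exact absurd ht (not_lt.mpr (hs₀min t (Finset.mem_filter.mpr ⟨Finset.mem_univ _, hc⟩)))
  set i : Fin n := (ofLex s₀).1 with hi
  set j : Fin m := (ofLex s₀).2 with hj
  have hs₀eq : s₀ = toLex (i, j) := rfl
  set A := acc n a with hA
  set K := acc m κf with hK
  -- prefix entries of d agree with the greedy matrix
  have hprev_row : ∀ j' : Fin m, j' < j → d (toLex (i, j')) = gg A K i.val j'.val := by
    intro j' hj'
    have hlt : toLex (i, j') < s₀ := by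
      rw [hs₀eq]
      exact Prod.Lex.lt_iff.mpr (Or.inr ⟨rfl, hj'⟩)
    rw [hbefore _ hlt, G_apply]
  have hprev_col : ∀ i' : Fin n, i' < i → d (toLex (i', j)) = gg A K i'.val j.val := by
    intro i' hi'
    have hlt : toLex (i', j) < s₀ := by
      rw [hs₀eq]
      exact Prod.Lex.lt_iff.mpr (Or.inl hi')
    rw [hbefore _ hlt, G_apply]
  -- row constraint
  have hrow_le : d (toLex (i, j)) + (∑ j' ∈ Finset.univ.filter (fun j' : Fin m => j'.val < j.val),
      d (toLex (i, j'))) ≤ a i := by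
    rw [← hrow i]
    have hnotmem : j ∉ Finset.univ.filter (fun j' : Fin m => j'.val < j.val) := by
      simp
    have hins := Finset.sum_insert (f := fun j' : Fin m => d (toLex (i, j'))) hnotmem
    rw [← hins]
    apply Finset.sum_le_sum_of_subset (Finset.subset_univ _)
  have hcol_le : d (toLex (i, j)) + (∑ i' ∈ Finset.univ.filter (fun i' : Fin n => i'.val < i.val),
      d (toLex (i', j))) ≤ κf j := by
    rw [← hcol j]
    have hnotmem : i ∉ Finset.univ.filter (fun i' : Fin n => i'.val < i.val) := by
      simp
    have hins := Finset.sum_insert (f := fun i' : Fin n => d (toLex (i', j))) hnotmem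
    rw [← hins]
    apply Finset.sum_le_sum_of_subset (Finset.subset_univ _)
  -- identify the prefix sums
  have hrow_pre : (∑ j' ∈ Finset.univ.filter (fun j' : Fin m => j'.val < j.val),
      d (toLex (i, j'))) = min (K j.val) (A (i.val+1)) - min (K j.val) (A i.val) := by
    rw [← gg_row_prefix A K (acc_mono a) (acc_mono κf) (acc_zero κf) i.val j.val]
    rw [filter_val_sum j.val j.isLt.le (fun x => gg A K i.val x)]
    apply Finset.sum_congr rfl
    intro j' hj'
    simp only [Finset.mem_filter] at hj'
    exact hprev_row j' hj'.2
  have hcol_pre : (∑ i' ∈ Finset.univ.filter (fun i' : Fin n => i'.val < i.val),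
      d (toLex (i', j))) = min (K (j.val+1)) (A i.val) - min (K j.val) (A i.val) := by
    rw [← gg_col_prefix A K (acc_mono a) (acc_mono κf) (acc_zero a) j.val i.val]
    rw [filter_val_sum i.val i.isLt.le (fun x => gg A K x j.val)]
    apply Finset.sum_congr rfl
    intro i' hi'
    simp only [Finset.mem_filter] at hi'
    exact hprev_col i' hi'.2
  -- apply greedy dominance
  have hle : d (toLex (i, j)) ≤ gg A K i.val j.val := by
    apply gg_max A K (acc_mono a) (acc_mono κf)
    · have h1 : A (i.val + 1) = A i.val + a i := acc_succ a i
      rw [hrow_pre] at hrow_le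
      omega
    · have h1 : K (j.val + 1) = K j.val + κf j := acc_succ κf j
      rw [hcol_pre] at hcol_le
      omega
  have hlt : d s₀ < G n m a κf s₀ := by
    rw [hs₀eq, G_apply]
    exact lt_of_le_of_ne hle (by rw [hs₀eq, G_apply] at hs₀ne; exact hs₀ne)
  exact le_of_lt ((Finsupp.Lex.lt_iff (a := toLex d) (b := toLex (G n m a κf))).mpr ⟨s₀, hbefore, hlt⟩)
/-! ### bridge to a characteristic-zero field -/

lemma map_phi (k : Type) [CommSemiring k] (i : Fin n) :
    MvPolynomial.map (MvPolynomial.map (Nat.castRingHom k)) (phi n m i) =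
      ∑ j : Fin m, (MvPolynomial.C (MvPolynomial.X (toLex (i, j))) * MvPolynomial.X j :
        MvPolynomial (Fin m) (MvPolynomial (σt n m) k)) := by
  unfold phi
  rw [map_sum]
  apply Finset.sum_congr rfl
  intro j _
  rw [map_mul, MvPolynomial.map_C, MvPolynomial.map_X, MvPolynomial.map_X]

lemma pol_eq (k : Type) [CommSemiring k] (a : Fin n →₀ ℕ) (κ : Fin m → ℕ) :
    Pol (fun i j => toLex (i, j) : Fin n → Fin m → Lex (Fin n × Fin m))
      (MvPolynomial.monomial a (1 : k)) κ =
    MvPolynomial.map (Nat.castRingHom k)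
      (MvPolynomial.coeff (Finsupp.equivFunOnFinite.symm κ)
        (MvPolynomial.aeval (phi n m) (MvPolynomial.monomial a (1 : ℕ)))) := by
  unfold Pol
  rw [← MvPolynomial.coeff_map]
  congr 1
  simp only [MvPolynomial.aeval_monomial, map_one, one_mul]
  rw [map_finsuppProd]
  apply Finsupp.prod_congr
  intro i _
  rw [map_pow, map_phi]

lemma coeff_pol_ne (k : Type) [CommSemiring k] [CharZero k] [NoZeroDivisors k]
    (a : Fin n →₀ ℕ) (κ : Fin m → ℕ) (d : σt n m →₀ ℕ) :
    MvPolynomial.coeff d (Pol (fun i j => toLex (i, j) : Fin n → Fin m → Lex (Fin n × Fin m))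
      (MvPolynomial.monomial a (1 : k)) κ) ≠ 0 ↔
    ((∀ i, ∑ j : Fin m, d (toLex (i, j)) = a i) ∧
     (∀ j, ∑ i : Fin n, d (toLex (i, j)) = Finsupp.equivFunOnFinite.symm κ j)) := by
  rw [pol_eq, MvPolynomial.coeff_map, ← NZ_monomial a (Finsupp.equivFunOnFinite.symm κ) d]
  simp [Nat.cast_ne_zero]

/-- feasibility implies that the two total sums agree. -/
lemma totals_eq (a : Fin n →₀ ℕ) (κf : Fin m →₀ ℕ) (d : σt n m →₀ ℕ)
    (hrow : ∀ i, ∑ j : Fin m, d (toLex (i, j)) = a i)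
    (hcol : ∀ j, ∑ i : Fin n, d (toLex (i, j)) = κf j) :
    acc n a n = acc m κf m := by
  rw [acc_top, acc_top]
  calc ∑ i : Fin n, a i = ∑ i : Fin n, ∑ j : Fin m, d (toLex (i, j)) :=
        Finset.sum_congr rfl fun i _ => (hrow i).symm
    _ = ∑ j : Fin m, ∑ i : Fin n, d (toLex (i, j)) := Finset.sum_comm
    _ = ∑ j : Fin m, κf j := Finset.sum_congr rfl fun j _ => hcol j

end PolAux

lemma leadM_eq {k : Type*} [CommSemiring k] {σ' : Type*} [LinearOrder σ']
    {f : MvPolynomial σ' k} {d : σ' →₀ ℕ} (h1 : d ∈ f.support)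
    (h2 : ∀ e ∈ f.support, toLex e ≤ toLex d) : leadM f = toLex d := by
  letI : DecidableEq (Lex (σ' →₀ ℕ)) := Classical.decEq _
  have hmem : toLex d ∈ f.support.image (toLex : (σ' →₀ ℕ) → Lex (σ' →₀ ℕ)) :=
    Finset.mem_image_of_mem _ h1
  have hmax : (f.support.image (toLex : (σ' →₀ ℕ) → Lex (σ' →₀ ℕ))).max
      = ((toLex d : Lex (σ' →₀ ℕ)) : WithBot (Lex (σ' →₀ ℕ))) := by
    apply le_antisymm
    · apply Finset.max_le
      intro y hy
      obtain ⟨e, he, rfl⟩ := Finset.mem_image.mp hy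
      exact WithBot.coe_le_coe.mpr (h2 e he)
    · exact Finset.le_max hmem
  show WithBot.unbotD (toLex 0) ((f.support.image (toLex : (σ' →₀ ℕ) → Lex (σ' →₀ ℕ))).max) = toLex d
  rw [hmax]
  rfl


/-- over a field of characteristic zero, if `M' < M` are monomials of
`k[x₁,…,xₙ]` in the lex order with `x₁ > ⋯ > xₙ`, then for any `κ ∈ ℕᵐ` with
`Pol_κ(M) ≠ 0` and `Pol_κ(M') ≠ 0` one has `LeadM(Pol_κ(M')) < LeadM(Pol_κ(M))`
in the lex order on `k[x_i^{(j)}]` with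
`x₁^{(1)} > x₁^{(2)} > ⋯ > x₁^{(m)} > x₂^{(1)} > ⋯ > xₙ^{(m)}`. -/
theorem leadM_pol_lt_of_lt (k : Type) [Field k] [CharZero k] (n m : ℕ)
    (a a' : Fin n →₀ ℕ) (hlt : toLex a' < toLex a) (κ : Fin m → ℕ)
    (hM : Pol (fun i j => toLex (i, j) : Fin n → Fin m → Lex (Fin n × Fin m))
      (monomial a (1 : k)) κ ≠ 0)
    (hM' : Pol (fun i j => toLex (i, j) : Fin n → Fin m → Lex (Fin n × Fin m))
      (monomial a' (1 : k)) κ ≠ 0) :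
    leadM (Pol (fun i j => toLex (i, j) : Fin n → Fin m → Lex (Fin n × Fin m))
        (monomial a' (1 : k)) κ) <
      leadM (Pol (fun i j => toLex (i, j) : Fin n → Fin m → Lex (Fin n × Fin m))
        (monomial a (1 : k)) κ) := by
  classical
  set κf : Fin m →₀ ℕ := Finsupp.equivFunOnFinite.symm κ with hκf
  obtain ⟨d, hd⟩ := MvPolynomial.ne_zero_iff.mp hM
  obtain ⟨hdr, hdc⟩ := (PolAux.coeff_pol_ne k a κ d).mp hd
  obtain ⟨d', hd'⟩ := MvPolynomial.ne_zero_iff.mp hM'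
  obtain ⟨hdr', hdc'⟩ := (PolAux.coeff_pol_ne k a' κ d').mp hd'
  have htot : PolAux.acc n a n = PolAux.acc m κf m := PolAux.totals_eq a κf d hdr hdc
  have htot' : PolAux.acc n a' n = PolAux.acc m κf m := PolAux.totals_eq a' κf d' hdr' hdc'
  have hlead : leadM (Pol (fun i j => toLex (i, j) : Fin n → Fin m → Lex (Fin n × Fin m))
      (monomial a (1 : k)) κ) = toLex (PolAux.G n m a κf) := by
    apply leadM_eq
    · rw [MvPolynomial.mem_support_iff]
      exact (PolAux.coeff_pol_ne k a κ _).mpr ⟨PolAux.G_row a κf htot, PolAux.G_col a κf htot⟩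
    · intro e he
      rw [MvPolynomial.mem_support_iff] at he
      obtain ⟨h1, h2⟩ := (PolAux.coeff_pol_ne k a κ e).mp he
      exact PolAux.toLex_le_G a κf e h1 h2
  have hlead' : leadM (Pol (fun i j => toLex (i, j) : Fin n → Fin m → Lex (Fin n × Fin m))
      (monomial a' (1 : k)) κ) = toLex (PolAux.G n m a' κf) := by
    apply leadM_eq
    · rw [MvPolynomial.mem_support_iff]
      exact (PolAux.coeff_pol_ne k a' κ _).mpr ⟨PolAux.G_row a' κf htot', PolAux.G_col a' κf htot'⟩
    · intro e he
      rw [MvPolynomial.mem_support_iff] at he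
      obtain ⟨h1, h2⟩ := (PolAux.coeff_pol_ne k a' κ e).mp he
      exact PolAux.toLex_le_G a' κf e h1 h2
  rw [hlead, hlead']
  -- compare the two greedy matrices
  obtain ⟨i₀, hbelow, hstrict⟩ := hlt
  have hEq : ∀ x ≤ i₀.val, PolAux.acc n a' x = PolAux.acc n a x := by
    intro x hx
    show ∑ y ∈ Finset.range x, PolAux.pad n a' y = ∑ y ∈ Finset.range x, PolAux.pad n a y
    apply Finset.sum_congr rfl
    intro y hy
    rw [Finset.mem_range] at hy
    have hyi : y < i₀.val := lt_of_lt_of_le hy hx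
    have hyn : y < n := lt_trans hyi i₀.isLt
    have hfin : (⟨y, hyn⟩ : Fin n) < i₀ := hyi
    simp only [PolAux.pad, dif_pos hyn]
    exact hbelow _ hfin
  have hltA : PolAux.acc n a' (i₀.val + 1) < PolAux.acc n a (i₀.val + 1) := by
    have e1 := PolAux.acc_succ a' i₀
    have e2 := PolAux.acc_succ a i₀
    have e3 := hEq i₀.val le_rfl
    have e4 : a' i₀ < a i₀ := hstrict
    omega
  have hKm : PolAux.acc n a' (i₀.val + 1) < PolAux.acc m κf m := by
    have h3 : PolAux.acc n a (i₀.val + 1) ≤ PolAux.acc n a n := PolAux.acc_mono a i₀.isLt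
    omega
  obtain ⟨j₀, hj₀m, hstr, hbef⟩ := PolAux.gg_compare (PolAux.acc n a) (PolAux.acc n a')
    (PolAux.acc m κf) (PolAux.acc_mono a) (PolAux.acc_mono a') (PolAux.acc_mono κf)
    (PolAux.acc_zero κf) i₀.val hEq hltA m hKm (fun j hj => PolAux.acc_stab κf j hj)
  set j₀f : Fin m := ⟨j₀, hj₀m⟩ with hj₀f
  have hfirst : ∀ t, t < toLex (i₀, j₀f) →
      PolAux.G n m a' κf t = PolAux.G n m a κf t := by
    intro t ht
    have hteq : t = toLex ((ofLex t).1, (ofLex t).2) := rfl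
    rw [hteq, PolAux.G_apply, PolAux.G_apply]
    rcases Prod.Lex.lt_iff.mp ht with hlt1 | ⟨heq1, hlt2⟩
    · have hv : (ofLex t).1.val < i₀.val := hlt1
      have e1 := hEq (ofLex t).1.val (le_of_lt hv)
      have e2 := hEq ((ofLex t).1.val + 1) hv
      unfold PolAux.gg
      rw [e1, e2]
    · have hv : (ofLex t).1.val = i₀.val := congrArg Fin.val heq1
      have hv2 : (ofLex t).2.val < j₀ := hlt2
      rw [hv]
      exact hbef (ofLex t).2.val hv2
  have hlast : PolAux.G n m a' κf (toLex (i₀, j₀f)) < PolAux.G n m a κf (toLex (i₀, j₀f)) := by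
    rw [PolAux.G_apply, PolAux.G_apply]
    exact hstr
  exact (Finsupp.Lex.lt_iff (a := toLex (PolAux.G n m a' κf))
    (b := toLex (PolAux.G n m a κf))).mpr ⟨toLex (i₀, j₀f), hfirst, hlast⟩
end
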